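/- arXiv:2206.08993 — 5 statements merged into one kernel-verified Lean document; each statement's English description precedes it below -/
import Mathlib

section
/- Let α be a weak composition of length n and S ⊆ [n]. If the set T = {γ : γ ≥ α in Bruhat order and supp(γ) ⊆ S} is nonempty, then T contains a unique minimum element m(α, S) with respect to the Bruhat order. -/
/-- The `j`-th largest element (0-indexed) of a finite set of `Fin n`,
viewed as an element of `[n] = {1,...,n}` via `i ↦ i + 1`; `0` as default. -/
def jthLargestF (n : ℕ) (S : Finset (Fin n)) (j : ℕ) : ℕ :=
  (((Finset.sort S (· ≤ ·)).reverse).map (fun i => (i : ℕ) + 1)).getD j 0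

/-- The `j`-th smallest element (0-indexed), similarly. -/
def jthSmallestF (n : ℕ) (S : Finset (Fin n)) (j : ℕ) : ℕ :=
  ((Finset.sort S (· ≤ ·)).map (fun i => (i : ℕ) + 1)).getD j 0

/-- Order on subsets of `[n]`: equal cardinality and `j`-th largest elements compare. -/
def setLEF (n : ℕ) (S T : Finset (Fin n)) : Prop :=
  S.card = T.card ∧ ∀ j < S.card, jthLargestF n S j ≤ jthLargestF n T j

/-- The `c`-th column of the key tableau of the weak composition `α`: `{i : α i ≥ c}`. -/
def col (n : ℕ) (α : Fin n → ℕ) (c : ℕ) : Finset (Fin n) :=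
  Finset.univ.filter (fun i => c ≤ α i)

/-- The support of a weak composition. -/
def suppC (n : ℕ) (α : Fin n → ℕ) : Finset (Fin n) :=
  Finset.univ.filter (fun i => 0 < α i)

/-- Bruhat order on weak compositions: key tableaux have the same shape and
compare entry-wise, expressed column by column. -/
def bruhatLE (n : ℕ) (γ α : Fin n → ℕ) : Prop :=
  ∀ c : ℕ, 1 ≤ c → setLEF n (col n γ c) (col n α c)

/-- `μ` is the Bruhat-minimum of `{γ : γ ≥ α, supp γ ⊆ S}`. -/
def isBruhatMin (n : ℕ) (α : Fin n → ℕ) (S : Finset (Fin n)) (μ : Fin n → ℕ) : Prop :=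
  bruhatLE n α μ ∧ suppC n μ ⊆ S ∧
    ∀ γ : Fin n → ℕ, bruhatLE n α γ → suppC n γ ⊆ S → bruhatLE n μ γ

/-- `μ` is the Bruhat-maximum of `{γ : γ ≤ α, supp γ ⊆ S}`. -/
def isBruhatMax (n : ℕ) (α : Fin n → ℕ) (S : Finset (Fin n)) (μ : Fin n → ℕ) : Prop :=
  bruhatLE n μ α ∧ suppC n μ ⊆ S ∧
    ∀ γ : Fin n → ℕ, bruhatLE n γ α → suppC n γ ⊆ S → bruhatLE n γ μ

/-- `γ` is obtained from `α` by a single left swap: exchange parts `α i < α j` with `i < j`. -/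
def leftSwapStep (n : ℕ) (γ α : Fin n → ℕ) : Prop :=
  ∃ i j : Fin n, i < j ∧ α i < α j ∧ γ = fun k => α (Equiv.swap i j k)

/-- The left swap order: reflexive-transitive closure of single left swaps. -/
def leftSwapLE (n : ℕ) (γ α : Fin n → ℕ) : Prop :=
  Relation.ReflTransGen (leftSwapStep n) γ α

/-- `B = C ◁ A`: there is a strictly increasing choice `b` of elements of `C`,
`b k` being the smallest element of `C` that is `≥` the `k`-th smallest element
of `A` and exceeds all previously chosen elements, with `B` the set of chosen elements. -/
def isLhd (n : ℕ) (C A B : Finset (Fin n)) : Prop :=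
  ∃ b : Fin A.card → Fin n, StrictMono b ∧ (∀ k, b k ∈ C) ∧
    (∀ k : Fin A.card, jthSmallestF n A k ≤ (b k : ℕ) + 1) ∧
    (∀ k : Fin A.card, ∀ c ∈ C, jthSmallestF n A k ≤ (c : ℕ) + 1 →
      (∀ j : Fin A.card, j < k → b j < c) → b k ≤ c) ∧
    B = Finset.image b Finset.univ

/-- `lhdChain [C₁, ..., C_k] B` means `B = C₁ ◁ (C₂ ◁ (⋯ ◁ C_k))`. -/
def lhdChain (n : ℕ) : List (Finset (Fin n)) → Finset (Fin n) → Prop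
  | [], B => B = ∅
  | [C], B => B = C
  | C :: D :: rest, B => ∃ B', lhdChain n (D :: rest) B' ∧ isLhd n C B' B

/-- `T ∈ RSSYT(α)`: a reverse semistandard Young tableau of shape `α⁺`, encoded by its
columns (strictly decreasing sets, rows weakly decreasing), whose left key is
entry-wise at most `key α`. -/
def memRSSYT (n : ℕ) (α : Fin n → ℕ) (T : ℕ → Finset (Fin n)) : Prop :=
  (∀ c, 1 ≤ c → (T c).card = (col n α c).card) ∧
  (∀ c, 1 ≤ c → ∀ k < (T (c+1)).card, jthLargestF n (T (c+1)) k ≤ jthLargestF n (T c) k) ∧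
  (∀ c, 1 ≤ c → ∃ B, lhdChain n ((List.range c).map (fun i => T (i+1))) B ∧
    setLEF n B (col n α c))

/-- `(L, E) ∈ RSVT(α)`: a reverse set-valued tableau of shape `α⁺` encoded as a diagram
pair by columns: `L c` the leading entries and `E c` the extra entries of column `c`,
with left key (of the leading tableau) entry-wise at most `key α`. -/
def memRSVT (n : ℕ) (α : Fin n → ℕ) (L E : ℕ → Finset (Fin n)) : Prop :=
  (∀ c, 1 ≤ c → Disjoint (L c) (E c)) ∧
  (∀ c, 1 ≤ c → (L c).card = (col n α c).card) ∧
  (∀ c, 1 ≤ c → ∀ k < (L (c+1)).card, jthLargestF n (L (c+1)) k ≤ jthLargestF n (L c) k) ∧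
  (∀ c, 1 ≤ c → ∀ e ∈ E c,
    ((L (c+1)).filter (fun l => e < l)).card < ((L c).filter (fun l => e < l)).card) ∧
  (∀ c, 1 ≤ c → ∃ B, lhdChain n ((List.range c).map (fun i => L (i+1))) B ∧
    setLEF n B (col n α c))

/-- `(L, E)` is a valid reverse set-valued tableau (of some shape), without any
left-key condition. -/
def isValidRSVT (n : ℕ) (L E : ℕ → Finset (Fin n)) : Prop :=
  (∀ c, 1 ≤ c → Disjoint (L c) (E c)) ∧
  (∀ c, 1 ≤ c → (L (c+1)).card ≤ (L c).card) ∧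
  (∃ N, ∀ c, N ≤ c → L c = ∅ ∧ E c = ∅) ∧
  (∀ c, 1 ≤ c → ∀ k < (L (c+1)).card, jthLargestF n (L (c+1)) k ≤ jthLargestF n (L c) k) ∧
  (∀ c, 1 ≤ c → ∀ e ∈ E c,
    ((L (c+1)).filter (fun l => e < l)).card < ((L c).filter (fun l => e < l)).card)

/-- `j`-th largest element of a finite set of naturals (0-indexed), default `0`. -/
def jthLargestN (S : Finset ℕ) (j : ℕ) : ℕ :=
  ((Finset.sort S (· ≤ ·)).reverse).getD j 0

/-- `j`-th smallest element of a finite set of naturals (0-indexed), default `0`. -/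
def jthSmallestN (S : Finset ℕ) (j : ℕ) : ℕ :=
  (Finset.sort S (· ≤ ·)).getD j 0

set_option maxHeartbeats 1000000

namespace Stmt3Aux

variable {n : ℕ}

/-- sorted-decreasing list of a finset -/
def dl (T : Finset (Fin n)) : List (Fin n) := (Finset.sort T (· ≤ ·)).reverse

lemma dl_sorted (T : Finset (Fin n)) : (dl T).Pairwise (· > ·) := by
  rw [dl, List.pairwise_reverse]
  exact (Finset.sortedLT_sort T).pairwise

lemma dl_length (T : Finset (Fin n)) : (dl T).length = T.card := by
  simp [dl, Finset.length_sort]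

lemma dl_mem {T : Finset (Fin n)} {x : Fin n} : x ∈ dl T ↔ x ∈ T := by
  simp [dl, Finset.mem_sort]

lemma dl_nodup (T : Finset (Fin n)) : (dl T).Nodup := by
  simp [dl, Finset.sort_nodup]

lemma dl_toFinset (T : Finset (Fin n)) : (dl T).toFinset = T := by
  simp [dl, Finset.sort_toFinset]

lemma toFinset_dl {l : List (Fin n)} (h : l.Pairwise (· > ·)) : dl l.toFinset = l := by
  have hn : l.Nodup := h.nodup
  have : Finset.sort l.toFinset (· ≤ ·) = l.reverse := by
    refine (fun (h1 : List.Perm (Finset.sort l.toFinset (· ≤ ·)) l.reverse) h2 h3 => List.Perm.eq_of_pairwise' (r := (· ≤ ·)) h2 h3 h1) ?_ ?_ ?_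
    · exact ((Finset.sort_perm_toList _ _).trans (List.toFinset_toList hn)).trans
        (List.reverse_perm l).symm
    · exact Finset.pairwise_sort _ _
    · rw [List.pairwise_reverse]
      exact h.imp (fun hab => le_of_lt hab)
  rw [dl, this, List.reverse_reverse]

lemma flatMap_eq_map (l : List (Fin n)) : (l.flatMap fun a => [a.val]) = List.map Fin.val l := by
  induction l with
  | nil => rfl
  | cons a l ih => simp [List.flatMap_cons, ih]

lemma jthLargestF_def' (T : Finset (Fin n)) (j : ℕ) :
    jthLargestF n T j = ((dl T).map (fun i => i.val + 1)).getD j 0 := by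
  show (List.map (fun i => i + 1) ((dl T).flatMap fun a => [a.val])).getD j 0 = _
  rw [flatMap_eq_map, List.map_map]
  rfl

lemma jthLargestF_eq {T : Finset (Fin n)} {j : ℕ} (h : j < (dl T).length) :
    jthLargestF n T j = ((dl T).get ⟨j, h⟩ : ℕ) + 1 := by
  have hlen : j < ((dl T).map (fun i => i.val + 1)).length := by
    rw [List.length_map]; exact h
  rw [jthLargestF_def', List.getD_eq_getElem _ _ hlen, List.getElem_map]
  rfl

lemma setLEF_iff {A B : Finset (Fin n)} :
    setLEF n A B ↔ List.Forall₂ (· ≤ ·) (dl A) (dl B) := by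
  rw [List.forall₂_iff_get, setLEF]
  constructor
  · rintro ⟨hc, h⟩
    refine ⟨by simp [dl_length, hc], fun i h1 h2 => ?_⟩
    have := h i (by rwa [← dl_length])
    rw [jthLargestF_eq h1, jthLargestF_eq h2] at this
    exact_mod_cast Nat.le_of_succ_le_succ this
  · rintro ⟨hl, h⟩
    have hc : A.card = B.card := by rw [← dl_length, ← dl_length, hl]
    refine ⟨hc, fun j hj => ?_⟩
    have h1 : j < (dl A).length := by rwa [dl_length]
    have h2 : j < (dl B).length := by rwa [← hl]
    rw [jthLargestF_eq h1, jthLargestF_eq h2]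
    have := h j h1 h2
    exact Nat.succ_le_succ (by exact_mod_cast this)
    

/-- feasible choices: strictly decreasing lists inside `S` dominating `a` entrywise -/
structure Feas (S : Finset (Fin n)) (a t : List (Fin n)) : Prop where
  sorted : t.Pairwise (· > ·)
  mem : ∀ x ∈ t, x ∈ S
  dom : List.Forall₂ (· ≤ ·) a t

lemma sorted_get_lt {l : List (Fin n)} (h : l.Pairwise (· > ·)) {i j : ℕ}
    (hij : i < j) (hj : j < l.length) :
    l.get ⟨j, hj⟩ < l.get ⟨i, lt_trans hij hj⟩ :=
  h.rel_get_of_lt (show (⟨i, lt_trans hij hj⟩ : Fin l.length) < ⟨j, hj⟩ from hij)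


lemma sorted_get_le {l : List (Fin n)} (h : l.Pairwise (· > ·)) {i j : ℕ}
    (hij : i ≤ j) (hj : j < l.length) :
    l.get ⟨j, hj⟩ ≤ l.get ⟨i, lt_of_le_of_lt hij hj⟩ := by
  rcases eq_or_lt_of_le hij with he | hlt
  · subst he; exact le_refl _
  · exact le_of_lt (sorted_get_lt h hlt hj)

lemma sorted_index_le {l : List (Fin n)} (h : l.Pairwise (· > ·)) {i j : ℕ}
    (hi : i < l.length) (hj : j < l.length)
    (hle : l.get ⟨i, hi⟩ ≤ l.get ⟨j, hj⟩) : j ≤ i := by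
  by_contra hc
  exact absurd (sorted_get_lt h (Nat.lt_of_not_le hc) hj) (by exact not_lt_of_ge hle)

lemma forall₂_nat_sum_le {a b : List ℕ} (h : List.Forall₂ (· ≤ ·) a b) : a.sum ≤ b.sum := by
  induction h with
  | nil => simp
  | cons hab htl ih => simpa using Nat.add_le_add hab ih

lemma forall₂_nat_eq {a b : List ℕ} (h : List.Forall₂ (· ≤ ·) a b) (hs : b.sum ≤ a.sum) :
    a = b := by
  induction h with
  | nil => rfl
  | @cons x y l m hab htl ih =>
    simp only [List.sum_cons] at hs
    have h1 : l.sum ≤ m.sum := forall₂_nat_sum_le htl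
    have hxy : x = y := by omega
    have : m.sum ≤ l.sum := by omega
    rw [hxy, ih this]

theorem exists_min (S : Finset (Fin n)) (a : List (Fin n))
    (hex : ∃ l, Feas S a l) :
    ∃ t, Feas S a t ∧ ∀ l, Feas S a l → List.Forall₂ (· ≤ ·) t l := by
  classical
  obtain ⟨l₀, hl₀⟩ := hex
  set F := S.powerset.filter (fun T => Feas S a (dl T)) with hF
  have hmemF : ∀ (l : List (Fin n)), Feas S a l → l.toFinset ∈ F := by
    intro l hl
    rw [hF, Finset.mem_filter, Finset.mem_powerset]
    refine ⟨fun x hx => hl.mem x (by simpa using hx), ?_⟩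
    rw [toFinset_dl hl.sorted]; exact hl
  obtain ⟨T, hTF, hTmin⟩ := Finset.exists_min_image F (fun T => ∑ x ∈ T, (x : ℕ))
    ⟨l₀.toFinset, hmemF _ hl₀⟩
  have hT : Feas S a (dl T) := (Finset.mem_filter.mp hTF).2
  refine ⟨dl T, hT, ?_⟩
  intro l hl
  set t := dl T with htdef
  have hlen : t.length = l.length := by
    rw [← hl.dom.length_eq, ← hT.dom.length_eq]
  set m := List.zipWith min t l with hm
  have hmlen : m.length = t.length := by
    rw [hm, List.length_zipWith, hlen, min_self]
  have hmget : ∀ i (h : i < m.length), m.get ⟨i, h⟩ =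
      min (t.get ⟨i, by omega⟩) (l.get ⟨i, by rw [← hlen]; omega⟩) := by
    intro i h
    simp only [hm, List.get_eq_getElem, List.getElem_zipWith]
  have hmfeas : Feas S a m := by
    refine ⟨?_, ?_, ?_⟩
    · rw [List.pairwise_iff_get]
      intro i j hij
      rw [hmget i.1 i.2, hmget j.1 j.2]
      have h1 : t.get ⟨j.1, by omega⟩ < t.get ⟨i.1, by omega⟩ :=
        sorted_get_lt hT.sorted hij _
      have h2 : l.get ⟨j.1, by rw [← hlen]; omega⟩ < l.get ⟨i.1, by rw [← hlen]; omega⟩ :=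
        sorted_get_lt hl.sorted hij _
      exact lt_min (lt_of_le_of_lt (min_le_left _ _) h1) (lt_of_le_of_lt (min_le_right _ _) h2)
    · intro x hx
      obtain ⟨i, hi⟩ := List.get_of_mem hx
      rw [hmget i.1 i.2] at hi
      rcases min_cases (t.get ⟨i.1, by omega⟩) (l.get ⟨i.1, by rw [← hlen]; omega⟩) with
        ⟨he, _⟩ | ⟨he, _⟩ <;> rw [he] at hi
      · exact hT.mem _ (hi ▸ List.get_mem _ _)
      · exact hl.mem _ (hi ▸ List.get_mem _ _)
    · have hal : a.length = m.length := by rw [hmlen, ← hT.dom.length_eq]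
      have e1 : a.length = t.length := hT.dom.length_eq
      refine List.forall₂_of_length_eq_of_get hal ?_
      intro i h1 h2
      rw [hmget i h2]
      exact le_min ((List.forall₂_iff_get.mp hT.dom).2 i (by omega) (by omega))
        ((List.forall₂_iff_get.mp hl.dom).2 i (by omega) (by omega))
  have hMF := hmemF m hmfeas
  have hsum := hTmin m.toFinset hMF
  have hsum1 : ∑ x ∈ T, (x : ℕ) = (t.map Fin.val).sum := by
    have h2 := List.sum_toFinset Fin.val hT.sorted.nodup
    rw [← h2, htdef, dl_toFinset]
  have hsum2 : ∑ x ∈ m.toFinset, (x : ℕ) = (m.map Fin.val).sum :=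
    List.sum_toFinset _ hmfeas.sorted.nodup
  have hmt : m.map Fin.val = t.map Fin.val := by
    apply forall₂_nat_eq
    · refine List.forall₂_of_length_eq_of_get (by simp [hmlen]) ?_
      intro i h1 h2
      simp only [List.get_eq_getElem, List.getElem_map]
      have hg := hmget i (by simpa using h1)
      simp only [List.get_eq_getElem] at hg
      rw [hg]
      exact_mod_cast min_le_left _ _
    · rw [← hsum1, ← hsum2]; exact hsum
  have hmeq : m = t := List.map_injective_iff.mpr Fin.val_injective hmt
  refine List.forall₂_of_length_eq_of_get hlen ?_
  intro i h1 h2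
  have hg := hmget i (by omega)
  rw [List.get_of_eq hmeq] at hg
  simp only [List.get_eq_getElem] at hg ⊢
  calc t[i] = _ := hg
    _ ≤ l[i]'(by omega) := min_le_right _ _




theorem min_gap {S : Finset (Fin n)} {a t : List (Fin n)}
    (ht : Feas S a t) (hmin : ∀ l, Feas S a l → List.Forall₂ (· ≤ ·) t l)
    {j : ℕ} (hj : j < t.length) {s : Fin n} (hs : s ∈ S)
    (haj : a.get ⟨j, by rw [ht.dom.length_eq]; exact hj⟩ ≤ s)
    (hlt : s < t.get ⟨j, hj⟩) :
    ∃ h1 : j + 1 < t.length, s ≤ t.get ⟨j + 1, h1⟩ := by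
  by_contra hcon
  push_neg at hcon
  have hcon' : ∀ h1 : j + 1 < t.length, t.get ⟨j + 1, h1⟩ < s := hcon
  set u := t.set j s with hu
  have hulen : u.length = t.length := List.length_set ..
  have huget : ∀ i (h : i < u.length), u.get ⟨i, h⟩ =
      if j = i then s else t.get ⟨i, by omega⟩ := by
    intro i h
    simp only [hu, List.get_eq_getElem, List.getElem_set]
  have hufeas : Feas S a u := by
    refine ⟨?_, ?_, ?_⟩
    · rw [List.pairwise_iff_get]
      intro i1 i2 h12
      rw [huget i1.1 i1.2, huget i2.1 i2.2]
      have hi2 : (i2 : ℕ) < t.length := by omega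
      have hi1 : (i1 : ℕ) < t.length := by omega
      by_cases e1 : j = (i1 : ℕ)
      · rw [if_pos e1, if_neg (by omega)]
        -- s > t.get i2, with i2 > i1 = j, so i2 ≥ j+1
        have hj1 : j + 1 < t.length ∨ j + 1 = t.length := by omega
        have hj1' : j + 1 ≤ (i2 : ℕ) := by omega
        have h1 : j + 1 < t.length := by omega
        have h2 := hcon' h1
        rcases eq_or_lt_of_le hj1' with he | hlt2
        · have : t.get ⟨(i2 : ℕ), hi2⟩ = t.get ⟨j + 1, h1⟩ := by congr 1; exact Fin.mk_eq_mk.mpr (by omega)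
          rw [this]; exact h2
        · exact lt_trans (sorted_get_lt ht.sorted hlt2 hi2) h2
      · rw [if_neg e1]
        by_cases e2 : j = (i2 : ℕ)
        · rw [if_pos e2]
          -- t.get i1 > s : i1 < i2 = j ≤ ... t_{i1} > t_j > s
          have : t.get ⟨j, hj⟩ < t.get ⟨(i1 : ℕ), hi1⟩ := by
            have := sorted_get_lt ht.sorted (show (i1:ℕ) < j by omega) hj
            exact this
          exact lt_trans hlt this
        · rw [if_neg e2]
          exact sorted_get_lt ht.sorted h12 hi2
    · intro x hx
      rcases List.mem_or_eq_of_mem_set hx with h | h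
      · exact ht.mem x h
      · exact h ▸ hs
    · refine List.forall₂_of_length_eq_of_get (by rw [hulen, ht.dom.length_eq]) ?_
      intro i h1 h2
      rw [huget i h2]
      by_cases e : j = i
      · rw [if_pos e]
        have : a.get ⟨i, h1⟩ = a.get ⟨j, by rw [ht.dom.length_eq]; exact hj⟩ := by
          congr 1; exact Fin.mk_eq_mk.mpr (by omega)
        rw [this]; exact haj
      · rw [if_neg e]
        exact (List.forall₂_iff_get.mp ht.dom).2 i h1 (by omega)
  have := (List.forall₂_iff_get.mp (hmin u hufeas)).2 j hj (by omega)
  rw [huget j (by omega), if_pos rfl] at this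
  exact absurd this (not_le_of_gt hlt)


lemma strictMono_nat_of_fin {m k : ℕ} {f : Fin m → Fin k} (hf : StrictMono f) :
    ∀ i (h : i < m), i ≤ (f ⟨i, h⟩ : ℕ) := by
  intro i
  induction i with
  | zero => intro h; exact Nat.zero_le _
  | succ p ih =>
    intro h
    have hp : p < m := by omega
    have h2 : f ⟨p, hp⟩ < f ⟨p + 1, h⟩ := hf (by simp [Fin.lt_def])
    have h3 := ih hp
    have h4 : (f ⟨p, hp⟩ : ℕ) < (f ⟨p + 1, h⟩ : ℕ) := h2
    omega

theorem min_subset {S : Finset (Fin n)} {a a' t t' : List (Fin n)}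
    (ha : a.Pairwise (· > ·)) (hsub : a'.Sublist a)
    (ht : Feas S a t) (hmin : ∀ l, Feas S a l → List.Forall₂ (· ≤ ·) t l)
    (ht' : Feas S a' t') (hmin' : ∀ l, Feas S a' l → List.Forall₂ (· ≤ ·) t' l) :
    ∀ x ∈ t', x ∈ t := by
  classical
  obtain ⟨f, hf⟩ := List.sublist_iff_exists_fin_orderEmbedding_get_eq.mp hsub
  have hlt : t.length = a.length := ht.dom.length_eq.symm
  have hlt' : t'.length = a'.length := ht'.dom.length_eq.symm
  have hk'k : a'.length ≤ a.length := hsub.length_le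
  -- index form of the embedding
  set F : ℕ → ℕ := fun i => if h : i < a'.length then (f ⟨i, h⟩ : ℕ) else 0 with hFdef
  have hF1 : ∀ i (h : i < a'.length), F i < a.length := by
    intro i h; simp only [hFdef, dif_pos h]; exact (f ⟨i, h⟩).2
  have hF2 : ∀ i (h : i < a'.length), a'.get ⟨i, h⟩ = a.get ⟨F i, hF1 i h⟩ := by
    intro i h
    have := hf ⟨i, h⟩
    simp only [hFdef, dif_pos h]
    convert this using 2
  have hF3 : ∀ i (h : i < a'.length), i ≤ F i := by
    intro i h; simp only [hFdef, dif_pos h]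
    exact strictMono_nat_of_fin f.strictMono i h
  have hF4 : ∀ i i' (h : i < i') (h' : i' < a'.length), F i < F i' := by
    intro i i' h h'
    simp only [hFdef, dif_pos h', dif_pos (lt_trans h h')]
    exact f.strictMono (by simp [Fin.lt_def, h])
  -- prefix comparison : t'_j ≤ t_j
  have hpre : ∀ i (h : i < t'.length), t'.get ⟨i, h⟩ ≤ t.get ⟨i, by omega⟩ := by
    have hfeas : Feas S a' (t.take a'.length) := by
      refine ⟨ht.sorted.sublist (List.take_sublist _ _), ?_, ?_⟩
      · intro x hx; exact ht.mem x ((List.take_sublist _ _).mem hx)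
      · refine List.forall₂_of_length_eq_of_get (by simp [List.length_take]; omega) ?_
        intro i h1 h2
        have h3 : i < t.length := by simp [List.length_take] at h2; omega
        have h4 : (t.take a'.length).get ⟨i, h2⟩ = t.get ⟨i, h3⟩ := by
          simp [List.getElem_take]
        rw [h4, hF2 i h1]
        calc a.get ⟨F i, hF1 i h1⟩ ≤ a.get ⟨i, by omega⟩ :=
              sorted_get_le ha (hF3 i h1) _
          _ ≤ t.get ⟨i, h3⟩ := (List.forall₂_iff_get.mp ht.dom).2 i (by omega) h3
    intro i h
    have := (List.forall₂_iff_get.mp (hmin' _ hfeas)).2 i h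
      (by simp [List.length_take]; omega)
    calc t'.get ⟨i, h⟩ ≤ (t.take a'.length).get ⟨i, by simp [List.length_take]; omega⟩ := this
      _ = t.get ⟨i, by omega⟩ := by simp [List.getElem_take]
  -- the key step
  have hnemem : ∀ (x : Fin n), x ∉ t → ∀ i (h : i < t.length), t.get ⟨i, h⟩ ≠ x := by
    intro x hx i h he
    exact hx (he ▸ List.get_mem _ _)
  have step : ∀ j (hj : j < t'.length),
      (∀ i (hi : i < t'.length), j < i → t'.get ⟨i, hi⟩ ∈ t) → t'.get ⟨j, hj⟩ ∈ t := by
    intro j hj IH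
    by_contra hnot
    set x := t'.get ⟨j, hj⟩ with hxdef
    have hxS : x ∈ S := ht'.mem _ (List.get_mem _ _)
    have hja' : j < a'.length := by omega
    have hFja : F j < a.length := hF1 j hja'
    have hFjt : F j < t.length := by omega
    have haFx : a.get ⟨F j, hF1 j hja'⟩ ≤ x := by
      rw [← hF2 j hja']
      exact (List.forall₂_iff_get.mp ht'.dom).2 j (by omega) hj
    have hxle : x ≤ t.get ⟨j, by omega⟩ := hpre j hj
    -- bottom element is < x
    have hbot : t.get ⟨t.length - 1, by omega⟩ < x := by
      rcases lt_trichotomy x (t.get ⟨t.length - 1, by omega⟩) with hc | hc | hc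
      · -- min_gap at bottom index gives contradiction
        have hb : a.get ⟨t.length - 1, by omega⟩ ≤ x := by
          calc a.get ⟨t.length - 1, by omega⟩ ≤ a.get ⟨F j, hF1 j hja'⟩ :=
                sorted_get_le ha (by have := hF1 j hja'; omega) _
            _ ≤ x := haFx
        obtain ⟨hcon, -⟩ := min_gap ht hmin (by omega : t.length - 1 < t.length) hxS hb hc
        omega
      · exact absurd hc.symm (hnemem x hnot _ _)
      · exact hc
    have hPex : ∃ i, ∃ hi : i < t.length, t.get ⟨i, hi⟩ < x :=
      ⟨t.length - 1, by omega, hbot⟩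
    obtain ⟨m, ⟨hmlt, hmx⟩, hmmin⟩ : ∃ m, (∃ hi : m < t.length, t.get ⟨m, hi⟩ < x) ∧
        ∀ i, i < m → ∀ hi : i < t.length, x ≤ t.get ⟨i, hi⟩ := by
      refine ⟨Nat.find hPex, Nat.find_spec hPex, ?_⟩
      intro i him hi
      have := Nat.find_min hPex him
      push_neg at this
      exact this hi
    have hmpos : 0 < m := by
      by_contra hc
      have h0 : m ≤ j := by omega
      have h1 : t.get ⟨j, by omega⟩ ≤ t.get ⟨m, hmlt⟩ :=
        sorted_get_le ht.sorted h0 (by omega)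
      exact absurd (lt_of_le_of_lt (le_trans hxle h1) hmx) (lt_irrefl x)
    have hjm : j < m := by
      by_contra hc
      have : t.get ⟨j, by omega⟩ ≤ t.get ⟨m, hmlt⟩ :=
        sorted_get_le ht.sorted (Nat.le_of_not_lt hc) _
      exact absurd (lt_of_le_of_lt (le_trans hxle this) hmx) (lt_irrefl x)
    have hm1lt : m - 1 < t.length := by omega
    have hxm1 : x < t.get ⟨m - 1, hm1lt⟩ := by
      rcases lt_trichotomy x (t.get ⟨m - 1, hm1lt⟩) with hc | hc | hc
      · exact hc
      · exact absurd hc.symm (hnemem x hnot _ _)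
      · exact absurd hc (not_lt_of_ge (hmmin (m - 1) (by omega) hm1lt))
    -- x < a_{m-1}
    have hxam1 : x < a.get ⟨m - 1, by omega⟩ := by
      by_contra hc
      push_neg at hc
      obtain ⟨hcon, hle⟩ := min_gap ht hmin hm1lt hxS hc hxm1
      have he : m - 1 + 1 = m := by omega
      have : x ≤ t.get ⟨m, hmlt⟩ := by
        have h2 : t.get ⟨m - 1 + 1, hcon⟩ = t.get ⟨m, hmlt⟩ := by
          congr 1; exact Fin.mk_eq_mk.mpr he
        rw [← h2]; exact hle
      exact absurd (lt_of_le_of_lt this hmx) (lt_irrefl x)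
    have hFjm : m ≤ F j := by
      by_contra hc
      push_neg at hc
      have : a.get ⟨m - 1, by omega⟩ ≤ a.get ⟨F j, hF1 j hja'⟩ :=
        sorted_get_le ha (by omega) _
      exact absurd (lt_of_lt_of_le hxam1 (le_trans this haFx)) (lt_irrefl x)
    -- t.get (F j) ≤ t.get m < x, and a' j ≤ t.get (F j)
    have htFj : t.get ⟨F j, hFjt⟩ ≤ t.get ⟨m, hmlt⟩ :=
      sorted_get_le ht.sorted hFjm hFjt
    have haFj : a'.get ⟨j, hja'⟩ ≤ t.get ⟨F j, hFjt⟩ := by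
      rw [hF2 j hja']
      exact (List.forall₂_iff_get.mp ht.dom).2 (F j) hFja hFjt
    -- apply gap of t' at j with s = t.get m
    have htmS : t.get ⟨m, hmlt⟩ ∈ S := ht.mem _ (List.get_mem _ _)
    obtain ⟨hj1, hle1⟩ := min_gap ht' hmin' hj htmS
      (le_trans haFj htFj) (lt_of_le_of_lt (le_refl _) hmx)
    -- the element t'_{j+1} equals t_m
    have hmem1 : t'.get ⟨j + 1, hj1⟩ ∈ t := IH (j + 1) hj1 (by omega)
    obtain ⟨⟨σ, hσ⟩, hσe⟩ := List.get_of_mem hmem1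
    -- σ = m
    have hσm : σ = m := by
      have h1 : σ ≤ m := sorted_index_le ht.sorted hmlt hσ (by rw [hσe]; exact hle1)
      have h2 : t.get ⟨σ, hσ⟩ < t.get ⟨m - 1, hm1lt⟩ := by
        rw [hσe]
        calc t'.get ⟨j + 1, hj1⟩ < x := sorted_get_lt ht'.sorted (by omega) hj1
          _ < t.get ⟨m - 1, hm1lt⟩ := hxm1
      have h3 : m - 1 ≤ σ := by
        by_contra hc
        push_neg at hc
        exact absurd (sorted_get_le ht.sorted (by omega : σ ≤ m - 1) hm1lt)
          (not_le_of_gt h2)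
      rcases eq_or_lt_of_le h3 with he | hl
      · exfalso
        have : t.get ⟨σ, hσ⟩ = t.get ⟨m - 1, hm1lt⟩ := by
          congr 1; exact Fin.mk_eq_mk.mpr he.symm
        exact absurd this (ne_of_lt h2)
      · omega
    -- inner invariant
    have inner : ∀ i, j + 1 ≤ i → ∀ hi : i < t'.length,
        ∃ σ', ∃ hσ' : σ' < t.length, t'.get ⟨i, hi⟩ = t.get ⟨σ', hσ'⟩ ∧ σ' < F i := by
      intro i hi1
      induction i, hi1 using Nat.le_induction with
      | base =>
        intro hi
        refine ⟨m, hmlt, ?_, ?_⟩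
        · rw [← hσe]; congr 1; exact Fin.mk_eq_mk.mpr hσm
        · exact lt_of_le_of_lt hFjm (hF4 j (j + 1) (by omega) (by omega))
      | succ i hi1 ih =>
        intro hi
        have hilt : i < t'.length := by omega
        obtain ⟨σ', hσ', he', hlt'2⟩ := ih hilt
        have hia' : i < a'.length := by omega
        have hFia : F i < a.length := hF1 i hia'
        have hFit : F i < t.length := by omega
        -- gap of t' at i with s = t.get (F i)
        have h1 : t.get ⟨F i, hFit⟩ < t'.get ⟨i, hilt⟩ := by
          rw [he']
          exact sorted_get_lt ht.sorted hlt'2 hFit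
        have h2 : a'.get ⟨i, hia'⟩ ≤ t.get ⟨F i, hFit⟩ := by
          rw [hF2 i hia']
          exact (List.forall₂_iff_get.mp ht.dom).2 (F i) hFia hFit
        obtain ⟨hcon, hle2⟩ := min_gap ht' hmin' hilt
          (ht.mem _ (List.get_mem _ _)) h2 h1
        have hmem2 : t'.get ⟨i + 1, hi⟩ ∈ t := IH (i + 1) hi (by omega)
        obtain ⟨⟨σ'', hσ''⟩, hσe''⟩ := List.get_of_mem hmem2
        refine ⟨σ'', hσ'', hσe''.symm, ?_⟩
        have h3 : σ'' ≤ F i := by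
          apply sorted_index_le ht.sorted hFit hσ''
          rw [hσe'']
          exact hle2
        exact lt_of_le_of_lt h3 (hF4 i (i + 1) (by omega) (by omega))
    -- final contradiction at the last index
    have hlast : t'.length - 1 < t'.length := by omega
    have hjlast : j + 1 ≤ t'.length - 1 := by omega
    obtain ⟨σ', hσ', he', hlt'2⟩ := inner (t'.length - 1) hjlast hlast
    have hia' : t'.length - 1 < a'.length := by omega
    have hFia : F (t'.length - 1) < a.length := hF1 _ hia'
    have hFit : F (t'.length - 1) < t.length := by omega
    have h1 : t.get ⟨F (t'.length - 1), hFit⟩ < t'.get ⟨t'.length - 1, hlast⟩ := by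
      rw [he']
      exact sorted_get_lt ht.sorted hlt'2 hFit
    have h2 : a'.get ⟨t'.length - 1, hia'⟩ ≤ t.get ⟨F (t'.length - 1), hFit⟩ := by
      rw [hF2 _ hia']
      exact (List.forall₂_iff_get.mp ht.dom).2 _ hFia hFit
    obtain ⟨hcon, -⟩ := min_gap ht' hmin' hlast
      (ht.mem _ (List.get_mem _ _)) h2 h1
    omega
  -- downward strong induction
  have main : ∀ d j (hj : j < t'.length), t'.length - j ≤ d → t'.get ⟨j, hj⟩ ∈ t := by
    intro d
    induction d with
    | zero => intro j hj h; omega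
    | succ d ih =>
      intro j hj h
      exact step j hj (fun i hi hji => ih i hi (by omega))
  intro x hx
  obtain ⟨⟨i, hi⟩, he⟩ := List.get_of_mem hx
  exact he ▸ main t'.length i hi (by omega)


lemma setLEF_antisymm {A B : Finset (Fin n)} (h1 : setLEF n A B) (h2 : setLEF n B A) :
    A = B := by
  rw [setLEF_iff] at h1 h2
  have hlen : (dl A).length = (dl B).length := h1.length_eq
  have : dl A = dl B := by
    apply List.ext_get hlen
    intro i ha hb
    exact le_antisymm ((List.forall₂_iff_get.mp h1).2 i ha hb)
      ((List.forall₂_iff_get.mp h2).2 i hb ha)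
  rw [← dl_toFinset A, ← dl_toFinset B, this]

lemma col_mem_iff {α : Fin n → ℕ} {c : ℕ} {i : Fin n} : i ∈ col n α c ↔ c ≤ α i := by
  simp [col]

lemma eq_of_col_eq {β δ : Fin n → ℕ} (h : ∀ c, 1 ≤ c → col n β c = col n δ c) : β = δ := by
  have key : ∀ β δ : Fin n → ℕ, (∀ c, 1 ≤ c → col n β c = col n δ c) →
      ∀ i, β i ≤ δ i := by
    intro β δ h i
    rcases Nat.eq_zero_or_pos (β i) with h0 | h0
    · omega
    · have : i ∈ col n β (β i) := col_mem_iff.mpr (le_refl _)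
      rw [h (β i) h0] at this
      exact col_mem_iff.mp this
  funext i
  exact le_antisymm (key β δ h i) (key δ β (fun c hc => (h c hc).symm) i)

lemma bruhat_antisymm {β δ : Fin n → ℕ} (h1 : bruhatLE n β δ) (h2 : bruhatLE n δ β) :
    β = δ :=
  eq_of_col_eq (fun c hc => setLEF_antisymm (h1 c hc) (h2 c hc))

lemma suppC_eq_col_one (β : Fin n → ℕ) : suppC n β = col n β 1 := by
  ext i; simp [suppC, col, Nat.succ_le_iff]

lemma col_subset {α : Fin n → ℕ} {c c' : ℕ} (h : c ≤ c') : col n α c' ⊆ col n α c := by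
  intro i hi
  rw [col_mem_iff] at hi ⊢
  omega

/-- reconstruction of a composition from a nested chain of columns -/
lemma reconstruct (T : ℕ → Finset (Fin n)) (N : ℕ)
    (hnest : ∀ c, 1 ≤ c → T (c + 1) ⊆ T c)
    (hN : ∀ c, N ≤ c → T c = ∅) :
    ∃ μ : Fin n → ℕ, ∀ c, 1 ≤ c → col n μ c = T c := by
  classical
  set μ : Fin n → ℕ := fun i => ((Finset.range N).filter (fun c => i ∈ T (c + 1))).card
    with hμ
  have hmono : ∀ c c', 1 ≤ c → c ≤ c' → T c' ⊆ T c := by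
    intro c c' hc hcc'
    induction c', hcc' using Nat.le_induction with
    | base => exact subset_refl _
    | succ c' hcc' ih =>
      exact subset_trans (hnest c' (by omega)) ih
  have key : ∀ (i : Fin n) (c : ℕ), i ∈ T (c + 1) ↔ c < μ i := by
    intro i c
    constructor
    · intro hi
      have hcN : c < N := by
        by_contra hc
        rw [hN (c + 1) (by omega)] at hi
        exact absurd hi (Finset.notMem_empty i)
      have hsub : Finset.range (c + 1) ⊆ (Finset.range N).filter (fun c => i ∈ T (c + 1)) := by
        intro c' hc'
        rw [Finset.mem_range] at hc'
        rw [Finset.mem_filter, Finset.mem_range]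
        exact ⟨by omega, hmono (c' + 1) (c + 1) (by omega) (by omega) hi⟩
      have h2 := Finset.card_le_card hsub
      rw [Finset.card_range] at h2
      have hbeta : μ i = ((Finset.range N).filter (fun c => i ∈ T (c + 1))).card := rfl
      omega
    · intro hc
      by_contra hi
      have hsub : (Finset.range N).filter (fun c => i ∈ T (c + 1)) ⊆ Finset.range c := by
        intro c' hc'
        rw [Finset.mem_filter, Finset.mem_range] at hc'
        rw [Finset.mem_range]
        by_contra hcc
        exact hi (hmono (c + 1) (c' + 1) (by omega) (by omega) hc'.2)
      have h2 := Finset.card_le_card hsub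
      rw [Finset.card_range] at h2
      have hbeta : μ i = ((Finset.range N).filter (fun c => i ∈ T (c + 1))).card := rfl
      omega
  refine ⟨μ, fun c hc => ?_⟩
  ext i
  rw [col_mem_iff]
  have hkey := key i (c - 1)
  rw [show c - 1 + 1 = c by omega] at hkey
  constructor
  · intro hle; exact hkey.mpr (by omega)
  · intro hmem; have := hkey.mp hmem; omega


end Stmt3Aux

/-- if `{γ : γ ≥ α, supp γ ⊆ S}` is nonempty, it has a unique Bruhat-minimum. -/
theorem stmt3 (n : ℕ) (α : Fin n → ℕ) (S : Finset (Fin n))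
    (h : ∃ γ : Fin n → ℕ, bruhatLE n α γ ∧ suppC n γ ⊆ S) :
    ∃! μ : Fin n → ℕ, isBruhatMin n α S μ := by
  classical
  open Stmt3Aux in
  obtain ⟨γ₀, hγ₀, hs₀⟩ := h
  -- feasibility of the columns of any admissible γ
  have feasOf : ∀ (γ : Fin n → ℕ), bruhatLE n α γ → suppC n γ ⊆ S →
      ∀ c, 1 ≤ c → Feas S (dl (col n α c)) (dl (col n γ c)) := by
    intro γ hγ hsupp c hc
    refine ⟨dl_sorted _, ?_, setLEF_iff.mp (hγ c hc)⟩
    intro x hx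
    rw [dl_mem] at hx
    apply hsupp
    rw [suppC_eq_col_one]
    exact col_subset hc hx
  -- choose per-column minima
  have key : ∀ c, ∃ t : List (Fin n), 1 ≤ c →
      Feas S (dl (col n α c)) t ∧
        ∀ l, Feas S (dl (col n α c)) l → List.Forall₂ (· ≤ ·) t l := by
    intro c
    by_cases hc : 1 ≤ c
    · obtain ⟨t, h1, h2⟩ := exists_min S (dl (col n α c))
        ⟨dl (col n γ₀ c), feasOf γ₀ hγ₀ hs₀ c hc⟩
      exact ⟨t, fun _ => ⟨h1, h2⟩⟩
    · exact ⟨[], fun h => absurd h hc⟩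
  choose t ht using key
  set T : ℕ → Finset (Fin n) := fun c => (t c).toFinset with hT
  have hdlT : ∀ c, 1 ≤ c → dl (T c) = t c := by
    intro c hc
    exact toFinset_dl ((ht c hc).1.sorted)
  -- sublist of columns
  have hsubcol : ∀ c, 1 ≤ c → (dl (col n α (c + 1))).Sublist (dl (col n α c)) := by
    intro c hc
    apply List.Sublist.reverse
    apply List.sublist_of_subperm_of_pairwise (r := (· ≤ ·))
    · exact List.subperm_of_subset (Finset.sort_nodup _ _)
        (fun x hx => by
          rw [Finset.mem_sort] at hx
          rw [Finset.mem_sort]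
          exact col_subset (by omega) hx)
    · exact Finset.pairwise_sort _ _
    · exact Finset.pairwise_sort _ _
  have hnest : ∀ c, 1 ≤ c → T (c + 1) ⊆ T c := by
    intro c hc x hx
    rw [hT, List.mem_toFinset] at hx ⊢
    exact min_subset (dl_sorted _) (hsubcol c hc) (ht c hc).1 (ht c hc).2
      (ht (c + 1) (by omega)).1 (ht (c + 1) (by omega)).2 x hx
  -- eventually empty
  set N : ℕ := (Finset.univ.sup α) + 1 with hNdef
  have hcolN : ∀ c, N ≤ c → col n α c = ∅ := by
    intro c hcN
    ext i
    simp only [col_mem_iff, Finset.notMem_empty, iff_false]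
    have : α i ≤ Finset.univ.sup α := Finset.le_sup (Finset.mem_univ i)
    omega
  have hTN : ∀ c, N ≤ c → T c = ∅ := by
    intro c hcN
    have hc1 : 1 ≤ c := by omega
    have h1 : dl (col n α c) = [] := by
      rw [hcolN c hcN]
      rw [List.eq_nil_iff_forall_not_mem]
      intro x hx
      rw [dl_mem] at hx
      exact absurd hx (Finset.notMem_empty x)
    have h2 := (ht c hc1).1.dom
    rw [h1] at h2
    have h3 : t c = [] := (List.forall₂_nil_left_iff.mp h2)
    show (t c).toFinset = ∅
    rw [h3]; rfl
  obtain ⟨μ, hμcol⟩ := reconstruct T N hnest hTN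
  -- μ is admissible
  have hcards : ∀ c, 1 ≤ c → setLEF n (col n α c) (col n μ c) := by
    intro c hc
    rw [setLEF_iff, hμcol c hc, hdlT c hc]
    exact (ht c hc).1.dom
  have hsuppμ : suppC n μ ⊆ S := by
    rw [suppC_eq_col_one, hμcol 1 (le_refl 1)]
    intro x hx
    rw [hT, List.mem_toFinset] at hx
    exact (ht 1 (le_refl 1)).1.mem x hx
  have hminμ : ∀ γ : Fin n → ℕ, bruhatLE n α γ → suppC n γ ⊆ S → bruhatLE n μ γ := by
    intro γ hγ hsupp c hc
    rw [setLEF_iff, hμcol c hc, hdlT c hc]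
    exact (ht c hc).2 (dl (col n γ c)) (feasOf γ hγ hsupp c hc)
  refine ⟨μ, ⟨hcards, hsuppμ, hminμ⟩, ?_⟩
  rintro ν ⟨hν1, hν2, hν3⟩
  exact bruhat_antisymm (hν3 μ hcards hsuppμ) (hminμ ν hν1 hν2)
end

section
/- Let α be a weak composition of length n and S ⊆ [n]. If the set {γ : γ ≤ α in Bruhat order and supp(γ) ⊆ S} is nonempty, then it contains a unique maximum element M(α, S), and this set is nonempty if and only if |S| ≥ |supp(α)| and S' ≤ supp(α), where S' consists of the |supp(α)| smallest elements of S. -/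
namespace SA
variable {n : ℕ}

/-! ### Counting functions -/

def cnt (S : Finset (Fin n)) (x : ℕ) : ℕ := (S.filter (fun i : Fin n => x ≤ (i:ℕ)+1)).card
def lcnt (S : Finset (Fin n)) (x : ℕ) : ℕ := (S.filter (fun i : Fin n => (i:ℕ)+1 < x)).card
def chi (S : Finset (Fin n)) (x : ℕ) : ℕ := (S.filter (fun i : Fin n => (i:ℕ)+1 = x)).card

lemma cnt_zero (S : Finset (Fin n)) : cnt S 0 = S.card := by
  unfold cnt; rw [Finset.filter_true_of_mem]; intros; omega

lemma lcnt_zero (S : Finset (Fin n)) : lcnt S 0 = 0 := by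
  unfold lcnt
  rw [Finset.card_eq_zero, Finset.filter_eq_empty_iff]
  intros; omega

lemma cnt_add_lcnt (S : Finset (Fin n)) (x : ℕ) : cnt S x + lcnt S x = S.card := by
  unfold cnt lcnt
  rw [← Finset.card_filter_add_card_filter_not (p := fun i : Fin n => x ≤ (i:ℕ)+1) (s := S)]
  congr 2
  apply Finset.filter_congr; intros; simp

lemma cnt_large (S : Finset (Fin n)) (x : ℕ) (h : n + 1 ≤ x) : cnt S x = 0 := by
  unfold cnt
  rw [Finset.card_eq_zero, Finset.filter_eq_empty_iff]
  intro i _; have := i.isLt; omega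

lemma filter_split (S : Finset (Fin n)) (x : ℕ) :
    S.filter (fun i : Fin n => x ≤ (i:ℕ)+1) =
      S.filter (fun i : Fin n => (i:ℕ)+1 = x) ∪ S.filter (fun i : Fin n => x+1 ≤ (i:ℕ)+1) := by
  rw [← Finset.filter_or]; apply Finset.filter_congr; intros; simp; omega

lemma cnt_succ (S : Finset (Fin n)) (x : ℕ) : cnt S x = chi S x + cnt S (x+1) := by
  unfold cnt chi
  rw [filter_split, Finset.card_union_of_disjoint]
  rw [Finset.disjoint_filter]
  intros; omega

lemma lcnt_succ (S : Finset (Fin n)) (x : ℕ) : lcnt S (x+1) = lcnt S x + chi S x := by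
  unfold lcnt chi
  rw [show S.filter (fun i : Fin n => (i:ℕ)+1 < x+1) =
      S.filter (fun i : Fin n => (i:ℕ)+1 < x) ∪ S.filter (fun i : Fin n => (i:ℕ)+1 = x) by
    rw [← Finset.filter_or]; apply Finset.filter_congr; intros; simp; omega]
  rw [Finset.card_union_of_disjoint]
  rw [Finset.disjoint_filter]
  intros; omega

lemma cnt_mono (S T : Finset (Fin n)) (h : S ⊆ T) (x : ℕ) : cnt S x ≤ cnt T x :=
  Finset.card_le_card (Finset.filter_subset_filter _ h)

lemma lcnt_mono (S T : Finset (Fin n)) (h : S ⊆ T) (x : ℕ) : lcnt S x ≤ lcnt T x :=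
  Finset.card_le_card (Finset.filter_subset_filter _ h)

lemma chi_mono (S T : Finset (Fin n)) (h : S ⊆ T) (x : ℕ) : chi S x ≤ chi T x :=
  Finset.card_le_card (Finset.filter_subset_filter _ h)

lemma cnt_anti (S : Finset (Fin n)) {x y : ℕ} (h : x ≤ y) : cnt S y ≤ cnt S x := by
  apply Finset.card_le_card
  intro i hi
  simp only [Finset.mem_filter] at hi ⊢
  exact ⟨hi.1, by omega⟩

lemma chi_le_one (S : Finset (Fin n)) (x : ℕ) : chi S x ≤ 1 := by
  unfold chi
  apply Finset.card_le_one.2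
  intro a ha b hb
  simp at ha hb
  apply Fin.ext; omega

lemma chi_mem (S : Finset (Fin n)) (i : Fin n) (h : i ∈ S) : chi S ((i:ℕ)+1) = 1 := by
  unfold chi
  rw [show S.filter (fun j : Fin n => (j:ℕ)+1 = (i:ℕ)+1) = {i} from ?_, Finset.card_singleton]
  ext j; simp
  constructor
  · rintro ⟨_, hj⟩; apply Fin.ext; omega
  · rintro rfl; exact ⟨h, rfl⟩

lemma mem_of_chi (S : Finset (Fin n)) (x : ℕ) (h : 1 ≤ chi S x) : ∃ i ∈ S, (i:ℕ)+1 = x := by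
  unfold chi at h
  rw [Finset.one_le_card] at h
  obtain ⟨i, hi⟩ := h
  simp at hi
  exact ⟨i, hi.1, hi.2⟩

lemma ext_cnt (S T : Finset (Fin n)) (h : ∀ x, cnt S x = cnt T x) : S = T := by
  have hchi : ∀ x, chi S x = chi T x := by
    intro x
    have h1 := cnt_succ S x; have h2 := cnt_succ T x
    have := h x; have := h (x+1); omega
  ext i
  constructor
  · intro hi
    have := chi_mem S i hi
    obtain ⟨j, hj, hji⟩ := mem_of_chi T ((i:ℕ)+1) (by rw [← hchi]; omega)
    rwa [show j = i from Fin.ext (by omega)] at hj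
  · intro hi
    have := chi_mem T i hi
    obtain ⟨j, hj, hji⟩ := mem_of_chi S ((i:ℕ)+1) (by rw [hchi]; omega)
    rwa [show j = i from Fin.ext (by omega)] at hj

lemma cnt_union_disj (B C : Finset (Fin n)) (h : Disjoint B C) (x : ℕ) :
    cnt (B ∪ C) x = cnt B x + cnt C x := by
  unfold cnt
  rw [Finset.filter_union, Finset.card_union_of_disjoint (Finset.disjoint_filter_filter h)]

lemma cnt_sdiff_bound (B C : Finset (Fin n)) (h : C ⊆ B) (x : ℕ) :
    cnt B x + C.card ≤ cnt C x + B.card := by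
  have hu : C ∪ B \ C = B := Finset.union_sdiff_of_subset h
  have h1 : cnt B x = cnt C x + cnt (B \ C) x := by
    conv_lhs => rw [← hu, cnt_union_disj _ _ Finset.disjoint_sdiff x]
  have h2 : cnt (B \ C) x ≤ (B \ C).card := Finset.card_le_card (Finset.filter_subset _ _)
  have h3 : (B \ C).card = B.card - C.card := Finset.card_sdiff_of_subset h
  have h4 : C.card ≤ B.card := Finset.card_le_card h
  omega

/-! ### Sorted lists vs counting -/

lemma sorted_le_get (l : List (Fin n)) (h : l.Pairwise (· ≤ ·)) (i j : ℕ) (hi : i ≤ j)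
    (hj : j < l.length) : l[i]'(by omega) ≤ l[j] := by
  have := h.rel_get_of_le (a := ⟨i, by omega⟩) (b := ⟨j, hj⟩) (by simp [Fin.le_def]; omega)
  simpa [List.get_eq_getElem] using this

lemma jthLargest_unfold (S : Finset (Fin n)) (j : ℕ) :
    jthLargestF n S j = ((Finset.sort S (· ≤ ·)).reverse.map (fun i : Fin n => (i:ℕ)+1)).getD j 0 := by
  have e0 : jthLargestF n S j = (List.map (fun i => i+1)
      ((Finset.sort S (· ≤ ·)).reverse.flatMap (fun a => [((a:ℕ))]))).getD j 0 := by unfold jthLargestF; simp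
  rw [e0]
  congr 1
  rw [← List.flatMap_singleton' (l := (Finset.sort S (· ≤ ·)).reverse.map (fun i : Fin n => (i:ℕ)+1)),
    List.flatMap_map, List.map_flatMap]
  simp [List.flatMap_assoc]

lemma cnt_sortlist (S : Finset (Fin n)) (x : ℕ) :
    cnt S x = (Finset.sort S (· ≤ ·)).countP (fun i : Fin n => decide (x ≤ (i:ℕ)+1)) := by
  have h1 : (S.filter (fun i : Fin n => x ≤ (i:ℕ)+1)).val
      = S.val.filter (fun i : Fin n => x ≤ (i:ℕ)+1) := Finset.filter_val _ _
  have h3 : cnt S x = Multiset.card (S.val.filter (fun i : Fin n => x ≤ (i:ℕ)+1)) := by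
    rw [cnt, Finset.card, h1]
  rw [h3, ← Finset.sort_eq S (· ≤ ·), Multiset.filter_coe, Multiset.coe_card,
    List.countP_eq_length_filter]

lemma list_A1 (l : List (Fin n)) (hsort : l.Pairwise (· ≤ ·)) (j : ℕ) (hj : j < l.length) (x : ℕ) :
    x ≤ (l[l.length - 1 - j] : ℕ) + 1 ↔
      j + 1 ≤ l.countP (fun i : Fin n => decide (x ≤ (i:ℕ)+1)) := by
  set p : Fin n → Bool := fun i : Fin n => decide (x ≤ (i:ℕ)+1) with hp
  constructor
  · intro hx
    have hsplit : l.countP p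
        = (l.take (l.length - 1 - j)).countP p + (l.drop (l.length - 1 - j)).countP p := by
      conv_lhs => rw [← List.take_append_drop (l.length - 1 - j) l]
      exact List.countP_append
    have hdrop : (l.drop (l.length - 1 - j)).countP p = (l.drop (l.length - 1 - j)).length := by
      apply List.countP_eq_length.2
      intro a ha
      obtain ⟨i, hilen, hia⟩ := List.mem_iff_getElem.1 ha
      have hi2 : (l.length - 1 - j) + i < l.length := by simp at hilen; omega
      have h5 : (l.drop (l.length - 1 - j))[i] = l[(l.length - 1 - j) + i]'hi2 := by
        rw [List.getElem_drop]
      have h6 : ((l[l.length - 1 - j]'(by omega) : Fin n) : ℕ)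
          ≤ ((l[(l.length - 1 - j) + i]'hi2 : Fin n) : ℕ) :=
        sorted_le_get l hsort _ _ (by omega) _
      rw [← hia, h5, hp]
      simp only [decide_eq_true_eq]
      omega
    have hdl : (l.drop (l.length - 1 - j)).length = j + 1 := by simp; omega
    omega
  · intro hcnt
    by_contra hx
    push_neg at hx
    have hsplit : l.countP p
        = (l.take (l.length - j)).countP p + (l.drop (l.length - j)).countP p := by
      conv_lhs => rw [← List.take_append_drop (l.length - j) l]
      exact List.countP_append
    have htake : (l.take (l.length - j)).countP p = 0 := by
      apply List.countP_eq_zero.2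
      intro a ha
      obtain ⟨i, hilen, hia⟩ := List.mem_iff_getElem.1 ha
      have hilt : i < l.length - j := by simp at hilen; omega
      have h5 : (l.take (l.length - j))[i] = l[i]'(by omega) := by
        rw [List.getElem_take]
      have h6 : ((l[i]'(by omega) : Fin n) : ℕ) ≤ ((l[l.length - 1 - j]'(by omega) : Fin n) : ℕ) :=
        sorted_le_get l hsort _ _ (by omega) _
      rw [← hia, h5, hp]
      simp only [decide_eq_true_eq]
      omega
    have hdlen : (l.drop (l.length - j)).length = j := by simp; omega
    have := List.countP_le_length (l := l.drop (l.length - j)) (p := p)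
    omega

lemma A1 (S : Finset (Fin n)) (j : ℕ) (hj : j < S.card) (x : ℕ) :
    x ≤ jthLargestF n S j ↔ j + 1 ≤ cnt S x := by
  have hlen : (Finset.sort S (· ≤ ·)).length = S.card := Finset.length_sort (· ≤ ·)
  have hj' : j < (Finset.sort S (· ≤ ·)).length := by omega
  have e1 : jthLargestF n S j
      = ((Finset.sort S (· ≤ ·))[(Finset.sort S (· ≤ ·)).length - 1 - j]'(by omega) : ℕ) + 1 := by
    rw [jthLargest_unfold]
    have hjlen : j < ((Finset.sort S (· ≤ ·)).reverse.map (fun i : Fin n => (i:ℕ)+1)).length := by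
      simp [hlen, hj]
    rw [List.getD_eq_getElem _ _ hjlen, List.getElem_map, List.getElem_reverse]
  rw [e1, cnt_sortlist]
  exact list_A1 _ (Finset.pairwise_sort _ _) j hj' x

lemma cnt_le_card (S : Finset (Fin n)) (x : ℕ) : cnt S x ≤ S.card :=
  Finset.card_le_card (Finset.filter_subset _ _)

lemma setLEF_iff (S T : Finset (Fin n)) :
    setLEF n S T ↔ (S.card = T.card ∧ ∀ x, cnt S x ≤ cnt T x) := by
  constructor
  · rintro ⟨hcard, h⟩
    refine ⟨hcard, fun x => ?_⟩
    rcases Nat.eq_zero_or_pos (cnt S x) with h0 | h0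
    · omega
    · have hj : cnt S x - 1 < S.card := by have := cnt_le_card S x; omega
      have h1 : x ≤ jthLargestF n S (cnt S x - 1) := (A1 S _ hj x).2 (by omega)
      have h3 : x ≤ jthLargestF n T (cnt S x - 1) := le_trans h1 (h _ hj)
      have := (A1 T (cnt S x - 1) (by omega) x).1 h3
      omega
  · rintro ⟨hcard, h⟩
    refine ⟨hcard, fun j hj => ?_⟩
    have h2 : j + 1 ≤ cnt S (jthLargestF n S j) := (A1 S j hj _).1 (le_refl _)
    have h3 : j + 1 ≤ cnt T (jthLargestF n S j) := le_trans h2 (h _)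
    exact (A1 T j (by omega) _).2 h3

/-! ### Greedy maximal subset -/

lemma downInd (P : ℕ → Prop) (h0 : ∀ x, n + 1 ≤ x → P x)
    (hs : ∀ x, x < n + 1 → P (x+1) → P x) : ∀ x, P x := by
  have key : ∀ k x, n + 1 - x ≤ k → P x := by
    intro k
    induction k with
    | zero => intro x hx; exact h0 x (by omega)
    | succ k ih =>
      intro x hx
      by_cases h : n + 1 ≤ x
      · exact h0 x h
      · exact hs x (by omega) (ih (x+1) (by omega))
  intro x; exact key (n + 1) x (by omega)

def gcnt (S A : Finset (Fin n)) : ℕ → ℕ := fun x =>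
  if x < n + 1 then min (cnt A x) (gcnt S A (x+1) + chi S x) else 0
  termination_by x => n + 1 - x
  decreasing_by omega

lemma gcnt_ge (S A : Finset (Fin n)) {x : ℕ} (h : n + 1 ≤ x) : gcnt S A x = 0 := by
  rw [gcnt]; simp; omega

lemma gcnt_lt (S A : Finset (Fin n)) {x : ℕ} (h : x < n + 1) :
    gcnt S A x = min (cnt A x) (gcnt S A (x+1) + chi S x) := by
  conv_lhs => rw [gcnt]
  simp [h]

lemma gcnt_le_cnt (S A : Finset (Fin n)) (x : ℕ) : gcnt S A x ≤ cnt A x := by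
  by_cases h : x < n + 1
  · rw [gcnt_lt S A h]; omega
  · rw [gcnt_ge S A (by omega)]; omega

lemma gcnt_anti_succ (S A : Finset (Fin n)) (x : ℕ) : gcnt S A (x+1) ≤ gcnt S A x := by
  by_cases h : x < n + 1
  · rw [gcnt_lt S A h]
    have h1 : gcnt S A (x+1) ≤ cnt A (x+1) := gcnt_le_cnt S A (x+1)
    have h2 : cnt A (x+1) ≤ cnt A x := cnt_anti A (by omega)
    omega
  · rw [gcnt_ge S A (show n+1 ≤ x+1 by omega)]
    exact Nat.zero_le _

lemma gcnt_step (S A : Finset (Fin n)) (x : ℕ) : gcnt S A x ≤ gcnt S A (x+1) + chi S x := by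
  by_cases h : x < n + 1
  · rw [gcnt_lt S A h]; omega
  · rw [gcnt_ge S A (by omega)]; omega

def gset (S A : Finset (Fin n)) : Finset (Fin n) :=
  S.filter (fun i : Fin n => gcnt S A ((i:ℕ)+1) = gcnt S A ((i:ℕ)+2) + 1)

lemma gset_subset (S A : Finset (Fin n)) : gset S A ⊆ S := Finset.filter_subset _ _

lemma chi_gset (S A : Finset (Fin n)) (x : ℕ) :
    chi (gset S A) x = if gcnt S A x = gcnt S A (x+1) + 1 then chi S x else 0 := by
  unfold chi gset
  rw [Finset.filter_filter]
  split_ifs with h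
  · apply Finset.card_nbij' id id
    · intro i hi
      simp only [Finset.mem_coe, Finset.mem_filter] at hi ⊢
      exact ⟨hi.1, hi.2.2⟩
    · intro i hi
      simp only [Finset.mem_coe, Finset.mem_filter, id] at hi ⊢
      refine ⟨hi.1, ?_, hi.2⟩
      have h2 : (i:ℕ)+1 = x := hi.2
      rw [h2]
      rw [show (i:ℕ)+2 = x + 1 by omega]
      exact h
    · intro _ _; rfl
    · intro _ _; rfl
  · rw [Finset.card_eq_zero, Finset.filter_eq_empty_iff]
    rintro i hi ⟨hq, hx⟩
    apply h
    rw [← hx] at h ⊢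
    rw [show (i:ℕ)+1+1 = (i:ℕ)+2 by omega]
    exact hq

lemma cnt_gset (S A : Finset (Fin n)) : ∀ x, cnt (gset S A) x = gcnt S A x := by
  apply downInd (n := n)
  · intro x hx
    rw [cnt_large _ _ hx, gcnt_ge _ _ hx]
  · intro x hx ih
    rw [cnt_succ, ih, chi_gset]
    have h1 := gcnt_anti_succ S A x
    have h2 := gcnt_step S A x
    have h3 := chi_le_one S x
    have h4 : gcnt S A (x+1) ≤ cnt A (x+1) := gcnt_le_cnt S A (x+1)
    have h5 : cnt A (x+1) ≤ cnt A x := cnt_anti A (by omega)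
    split_ifs with h
    · omega
    · rw [gcnt_lt S A hx] at h ⊢
      omega

lemma gcnt_max (S A T' : Finset (Fin n)) (hsub : T' ⊆ S)
    (hle : ∀ y, cnt T' y ≤ cnt A y) : ∀ x, cnt T' x ≤ gcnt S A x := by
  apply downInd (n := n)
  · intro x hx; rw [cnt_large _ _ hx]; omega
  · intro x hx ih
    rw [gcnt_lt S A hx]
    have e1 := cnt_succ T' x
    have h1 : chi T' x ≤ chi S x := chi_mono _ _ hsub x
    have h2 := hle x
    omega

lemma gcnt_full (S A : Finset (Fin n)) (hfull : ∀ x, A.card ≤ cnt A x + lcnt S x) :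
    ∀ x, A.card ≤ gcnt S A x + lcnt S x := by
  apply downInd (n := n)
  · intro x hx
    have h1 : lcnt S (n+1) ≤ lcnt S x := by
      apply Finset.card_le_card
      intro i hi
      rw [Finset.mem_filter] at hi ⊢
      refine ⟨hi.1, by omega⟩
    have h2 := hfull (n+1)
    rw [cnt_large A (n+1) (le_refl _)] at h2
    omega
  · intro x hx ih
    rw [gcnt_lt S A hx]
    rcases le_or_gt (cnt A x) (gcnt S A (x+1) + chi S x) with h | h
    · have := hfull x; omega
    · have := lcnt_succ S x; omega

lemma gcnt_nest (S A' A : Finset (Fin n)) (hsub : A' ⊆ A) :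
    ∀ x, gcnt S A x + cnt A' x ≤ gcnt S A' x + cnt A x := by
  apply downInd (n := n)
  · intro x hx
    rw [gcnt_ge _ _ hx, gcnt_ge _ _ hx, cnt_large _ _ hx, cnt_large _ _ hx]
  · intro x hx ih
    rw [gcnt_lt S A hx, gcnt_lt S A' hx]
    have e1 := cnt_succ A x
    have e2 := cnt_succ A' x
    have h3 : chi A' x ≤ chi A x := chi_mono _ _ hsub x
    have h4 : cnt A' x ≤ cnt A x := cnt_mono _ _ hsub x
    omega

lemma gset_nest (S A' A : Finset (Fin n)) (hsub : A' ⊆ A) : gset S A' ⊆ gset S A := by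
  intro i hi
  unfold gset at hi ⊢
  rw [Finset.mem_filter] at hi ⊢
  obtain ⟨hiS, hg'⟩ := hi
  refine ⟨hiS, ?_⟩
  set x : ℕ := (i:ℕ) + 1 with hxdef
  have hx : x < n + 1 := by have := i.isLt; omega
  have hchi : chi S x = 1 := chi_mem S i hiS
  by_contra hne
  rw [show (i:ℕ)+2 = x+1 by omega] at hne hg'
  rw [gcnt_lt S A hx, hchi] at hne
  have h0 : gcnt S A (x+1) ≤ gcnt S A x := gcnt_anti_succ S A x
  rw [gcnt_lt S A hx, hchi] at h0
  have hcap : cnt A x ≤ gcnt S A (x+1) := by omega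
  have hnest := gcnt_nest S A' A hsub (x+1)
  have hg2 : gcnt S A' (x+1) + 1 ≤ cnt A' x := hg' ▸ gcnt_le_cnt S A' x
  have e1 := cnt_succ A x
  have e2 := cnt_succ A' x
  have h3 : chi A' x ≤ chi A x := chi_mono _ _ hsub x
  have h4 := chi_le_one A x
  omega

/-! ### Columns and the maximum composition -/

lemma mem_col (α : Fin n → ℕ) (c : ℕ) (i : Fin n) : i ∈ col n α c ↔ c ≤ α i := by
  simp [col]

lemma col_anti (α : Fin n → ℕ) {c c' : ℕ} (h : c ≤ c') : col n α c' ⊆ col n α c := by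
  intro i hi; rw [mem_col] at hi ⊢; omega

lemma suppC_eq_col (α : Fin n → ℕ) : suppC n α = col n α 1 := by
  unfold suppC col
  apply Finset.filter_congr
  intro i _
  constructor <;> (intro h; omega)

lemma col_large (α : Fin n → ℕ) {c : ℕ} (h : Finset.univ.sup α + 1 ≤ c) : col n α c = ∅ := by
  rw [Finset.eq_empty_iff_forall_notMem]
  intro i hi
  rw [mem_col] at hi
  have := Finset.le_sup (f := α) (Finset.mem_univ i)
  omega

lemma gset_card_le (S A : Finset (Fin n)) : (gset S A).card ≤ A.card := by
  have h1 := cnt_gset S A 0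
  have h2 := gcnt_le_cnt S A 0
  rw [cnt_zero] at h1
  rw [cnt_zero] at h2
  omega

lemma gset_empty (S : Finset (Fin n)) : gset S (∅ : Finset (Fin n)) = ∅ := by
  rw [← Finset.card_eq_zero]
  have := gset_card_le S (∅ : Finset (Fin n))
  simpa using this

def MS (α : Fin n → ℕ) (S : Finset (Fin n)) : Fin n → ℕ := fun i =>
  ((Finset.range (Finset.univ.sup α + 1)).filter (fun c => i ∈ gset S (col n α (c+1)))).card

lemma gsetcol_anti (α : Fin n → ℕ) (S : Finset (Fin n)) {c c' : ℕ} (h : c ≤ c') :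
    gset S (col n α c') ⊆ gset S (col n α c) :=
  gset_nest _ _ _ (col_anti α h)

lemma gsetcol_empty (α : Fin n → ℕ) (S : Finset (Fin n)) {c : ℕ}
    (h : Finset.univ.sup α + 1 ≤ c) : gset S (col n α c) = ∅ := by
  rw [col_large α h, gset_empty]

lemma le_MS_iff (α : Fin n → ℕ) (S : Finset (Fin n)) (i : Fin n) {c : ℕ} (hc : 1 ≤ c) :
    c ≤ MS α S i ↔ i ∈ gset S (col n α c) := by
  constructor
  · intro hM
    by_contra hni
    have hsub : (Finset.range (Finset.univ.sup α + 1)).filter (fun c' => i ∈ gset S (col n α (c'+1)))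
        ⊆ Finset.range (c-1) := by
      intro c' hc'
      rw [Finset.mem_filter, Finset.mem_range] at hc'
      rw [Finset.mem_range]
      by_contra hge
      push_neg at hge
      exact hni (gsetcol_anti α S (show c ≤ c'+1 by omega) hc'.2)
    have := Finset.card_le_card hsub
    rw [Finset.card_range] at this
    unfold MS at hM
    omega
  · intro hi
    have hcN : c < Finset.univ.sup α + 1 := by
      by_contra h
      push_neg at h
      rw [gsetcol_empty α S (by omega)] at hi
      exact absurd hi (Finset.notMem_empty i)
    have hsub : Finset.range c
        ⊆ (Finset.range (Finset.univ.sup α + 1)).filter (fun c' => i ∈ gset S (col n α (c'+1))) := by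
      intro c' hc'
      rw [Finset.mem_range] at hc'
      rw [Finset.mem_filter, Finset.mem_range]
      exact ⟨by omega, gsetcol_anti α S (by omega) hi⟩
    have := Finset.card_le_card hsub
    rw [Finset.card_range] at this
    unfold MS
    omega

lemma col_MS (α : Fin n → ℕ) (S : Finset (Fin n)) {c : ℕ} (hc : 1 ≤ c) :
    col n (MS α S) c = gset S (col n α c) := by
  ext i; rw [mem_col, le_MS_iff α S i hc]

lemma full_col (α : Fin n → ℕ) (S : Finset (Fin n))
    (hfull : ∀ x, (col n α 1).card ≤ cnt (col n α 1) x + lcnt S x) {c : ℕ} (hc : 1 ≤ c) :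
    ∀ x, (col n α c).card ≤ cnt (col n α c) x + lcnt S x := by
  intro x
  have hsub : col n α c ⊆ col n α 1 := col_anti α hc
  have h1 := cnt_sdiff_bound (col n α 1) (col n α c) hsub x
  have h2 := hfull x
  omega

lemma card_gsetcol (α : Fin n → ℕ) (S : Finset (Fin n))
    (hfull : ∀ x, (col n α 1).card ≤ cnt (col n α 1) x + lcnt S x) {c : ℕ} (hc : 1 ≤ c) :
    (gset S (col n α c)).card = (col n α c).card := by
  have h1 := cnt_gset S (col n α c) 0
  have h2 := gcnt_le_cnt S (col n α c) 0
  have h3 := gcnt_full S (col n α c) (full_col α S hfull hc) 0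
  rw [lcnt_zero] at h3
  rw [cnt_zero] at h1 h2
  omega

lemma MS_isMax (α : Fin n → ℕ) (S : Finset (Fin n))
    (hfull : ∀ x, (col n α 1).card ≤ cnt (col n α 1) x + lcnt S x) :
    isBruhatMax n α S (MS α S) := by
  refine ⟨?_, ?_, ?_⟩
  · intro c hc
    rw [col_MS α S hc, setLEF_iff]
    refine ⟨card_gsetcol α S hfull hc, fun x => ?_⟩
    rw [cnt_gset]
    exact gcnt_le_cnt _ _ x
  · rw [suppC_eq_col, col_MS α S (le_refl 1)]
    exact gset_subset S _
  · intro γ hγ hγS c hc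
    rw [col_MS α S hc, setLEF_iff]
    have hsle := (setLEF_iff _ _).1 (hγ c hc)
    have hγsub : col n γ c ⊆ S := fun i hi => hγS (by
      rw [suppC_eq_col]
      exact col_anti γ hc hi)
    refine ⟨by rw [card_gsetcol α S hfull hc]; exact hsle.1, fun x => ?_⟩
    rw [cnt_gset]
    exact gcnt_max S (col n α c) (col n γ c) hγsub hsle.2 x

lemma bruhat_antisymm (γ μ : Fin n → ℕ) (h1 : bruhatLE n γ μ) (h2 : bruhatLE n μ γ) :
    γ = μ := by
  have hcol : ∀ c, 1 ≤ c → col n γ c = col n μ c := by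
    intro c hc
    obtain ⟨hc1, hle1⟩ := (setLEF_iff _ _).1 (h1 c hc)
    obtain ⟨hc2, hle2⟩ := (setLEF_iff _ _).1 (h2 c hc)
    exact ext_cnt _ _ (fun x => le_antisymm (hle1 x) (hle2 x))
  funext i
  have key : ∀ c, 1 ≤ c → (c ≤ γ i ↔ c ≤ μ i) := by
    intro c hc
    rw [← mem_col, ← mem_col, hcol c hc]
  rcases Nat.eq_zero_or_pos (γ i) with h0 | h0 <;> rcases Nat.eq_zero_or_pos (μ i) with h0' | h0'
  · omega
  · have := (key (μ i) h0').2 (le_refl _); omega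
  · have := (key (γ i) h0).1 (le_refl _); omega
  · have a := (key (γ i) h0).1 (le_refl _)
    have b := (key (μ i) h0').2 (le_refl _)
    omega

lemma exists_to_full (α : Fin n → ℕ) (S : Finset (Fin n))
    (h : ∃ γ : Fin n → ℕ, bruhatLE n γ α ∧ suppC n γ ⊆ S) :
    (col n α 1).card ≤ S.card ∧
      ∀ x, (col n α 1).card ≤ cnt (col n α 1) x + lcnt S x := by
  obtain ⟨γ, hγ, hγS⟩ := h
  obtain ⟨hcard, hle⟩ := (setLEF_iff _ _).1 (hγ 1 (le_refl 1))
  rw [suppC_eq_col] at hγS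
  constructor
  · rw [← hcard]; exact Finset.card_le_card hγS
  · intro x
    have e1 := cnt_add_lcnt (col n γ 1) x
    have e2 : lcnt (col n γ 1) x ≤ lcnt S x := lcnt_mono _ _ hγS x
    have := hle x
    omega

/-! ### Ranks and the smallest-elements set -/

def rk (S : Finset (Fin n)) (y : Fin n) : ℕ := (S.filter (fun z => z ≤ y)).card

lemma card_fin_lt (L m : ℕ) (hm : m ≤ L) :
    (Finset.univ.filter (fun j : Fin L => (j:ℕ) < m)).card = m := by
  rw [show Finset.univ.filter (fun j : Fin L => (j:ℕ) < m)
      = Finset.map (Fin.castLEEmb hm) Finset.univ from ?_]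
  · rw [Finset.card_map, Finset.card_univ, Fintype.card_fin]
  · ext j
    simp only [Finset.mem_filter, Finset.mem_univ, true_and, Finset.mem_map, Fin.castLEEmb]
    constructor
    · intro hj
      exact ⟨⟨(j:ℕ), hj⟩, by simp [Fin.castLE]⟩
    · rintro ⟨a, _, rfl⟩
      simp [Fin.castLE]

lemma rk_orderIso (S : Finset (Fin n)) (k : Fin S.card) :
    rk S (((S.orderIsoOfFin rfl) k : {x // x ∈ S}) : Fin n) = (k:ℕ) + 1 := by
  set e := S.orderIsoOfFin rfl with he
  have him : S.filter (fun z => z ≤ ((e k : {x // x ∈ S}) : Fin n))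
      = (Finset.univ.filter (fun j : Fin S.card => j ≤ k)).image
          (fun j => ((e j : {x // x ∈ S}) : Fin n)) := by
    ext z
    simp only [Finset.mem_filter, Finset.mem_image, Finset.mem_univ, true_and]
    constructor
    · rintro ⟨hz, hzle⟩
      refine ⟨e.symm ⟨z, hz⟩, ?_, by simp⟩
      have h1 : (⟨z, hz⟩ : {x // x ∈ S}) ≤ e k := Subtype.coe_le_coe.1 hzle
      have h2 : e.symm ⟨z, hz⟩ ≤ e.symm (e k) := e.symm.monotone h1
      simpa using h2
    · rintro ⟨j, hjk, rfl⟩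
      exact ⟨(e j).2, Subtype.coe_le_coe.2 (e.monotone hjk)⟩
  rw [rk, him, Finset.card_image_of_injective _
    (fun a b hab => e.injective (Subtype.coe_injective hab))]
  rw [show Finset.univ.filter (fun j : Fin S.card => j ≤ k) = Finset.Iic k by ext j; simp]
  exact Fin.card_Iic k

lemma rk_card (S : Finset (Fin n)) (m : ℕ) (hm : m ≤ S.card) :
    (S.filter (fun y => rk S y ≤ m)).card = m := by
  set e := S.orderIsoOfFin rfl with he
  have him : S.filter (fun y => rk S y ≤ m)
      = (Finset.univ.filter (fun j : Fin S.card => (j:ℕ) < m)).image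
          (fun j => ((e j : {x // x ∈ S}) : Fin n)) := by
    ext z
    simp only [Finset.mem_filter, Finset.mem_image, Finset.mem_univ, true_and]
    constructor
    · rintro ⟨hz, hrk⟩
      refine ⟨e.symm ⟨z, hz⟩, ?_, by simp⟩
      have h1 := rk_orderIso S (e.symm ⟨z, hz⟩)
      rw [he] at h1 ⊢
      rw [OrderIso.apply_symm_apply] at h1
      simp only at h1
      omega
    · rintro ⟨j, hj, rfl⟩
      refine ⟨(e j).2, ?_⟩
      rw [rk_orderIso S j]
      omega
  rw [him, Finset.card_image_of_injective _
    (fun a b hab => e.injective (Subtype.coe_injective hab)), card_fin_lt _ _ hm]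

lemma cnt_rkfilter_le (S A₁ : Finset (Fin n)) (m : ℕ)
    (hP : ∀ x, m ≤ cnt A₁ x + lcnt S x) :
    ∀ x, cnt (S.filter (fun y => rk S y ≤ m)) x ≤ cnt A₁ x := by
  intro x
  set S' := S.filter (fun y => rk S y ≤ m) with hS'
  rcases Finset.eq_empty_or_nonempty (S'.filter (fun i : Fin n => x ≤ (i:ℕ)+1)) with hF | hF
  · have : cnt S' x = 0 := by rw [cnt, hF, Finset.card_empty]
    omega
  · set F := S'.filter (fun i : Fin n => x ≤ (i:ℕ)+1) with hFdef
    set y := F.max' hF with hy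
    have hyF : y ∈ F := F.max'_mem hF
    have hyS' : y ∈ S' := (Finset.mem_filter.1 hyF).1
    have hyx : x ≤ (y:ℕ)+1 := (Finset.mem_filter.1 hyF).2
    have hrk : rk S y ≤ m := (Finset.mem_filter.1 hyS').2
    have hsub : F ∪ S.filter (fun i : Fin n => (i:ℕ)+1 < x) ⊆ S.filter (fun z => z ≤ y) := by
      intro z hz
      rw [Finset.mem_union] at hz
      rcases hz with hz | hz
      · rw [Finset.mem_filter]
        exact ⟨(Finset.mem_filter.1 (Finset.mem_filter.1 hz).1).1, F.le_max' z hz⟩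
      · rw [Finset.mem_filter] at hz ⊢
        refine ⟨hz.1, ?_⟩
        exact Fin.le_def.2 (by omega)
    have hdisj : Disjoint F (S.filter (fun i : Fin n => (i:ℕ)+1 < x)) := by
      rw [Finset.disjoint_left]
      intro a haF haL
      have ha1 : x ≤ (a:ℕ)+1 := (Finset.mem_filter.1 haF).2
      have ha2 : (a:ℕ)+1 < x := (Finset.mem_filter.1 haL).2
      omega
    have hcard := Finset.card_le_card hsub
    rw [Finset.card_union_of_disjoint hdisj] at hcard
    have e1 : cnt S' x = F.card := rfl
    have e2 : lcnt S x = (S.filter (fun i : Fin n => (i:ℕ)+1 < x)).card := rfl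
    have e3 : rk S y = (S.filter (fun z => z ≤ y)).card := rfl
    have := hP x
    omega

end SA
/-- if `{γ : γ ≤ α, supp γ ⊆ S}` is nonempty then it has a unique
Bruhat-maximum `M(α,S)`; and it is nonempty iff `|S| ≥ |supp α|` and the set of the
`|supp α|` smallest elements of `S` is `≤ supp α`. -/
theorem stmt4 (n : ℕ) (α : Fin n → ℕ) (S : Finset (Fin n)) :
    ((∃ γ : Fin n → ℕ, bruhatLE n γ α ∧ suppC n γ ⊆ S) →
      ∃! μ : Fin n → ℕ, isBruhatMax n α S μ) ∧
    ((∃ γ : Fin n → ℕ, bruhatLE n γ α ∧ suppC n γ ⊆ S) ↔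
      ((suppC n α).card ≤ S.card ∧
        setLEF n (S.filter (fun x => (S.filter (fun y => y ≤ x)).card ≤ (suppC n α).card))
          (suppC n α))) := by
  constructor
  · intro hne
    obtain ⟨hcard, hfull⟩ := SA.exists_to_full α S hne
    have hM := SA.MS_isMax α S hfull
    refine ⟨SA.MS α S, hM, ?_⟩
    intro μ' hμ'
    exact SA.bruhat_antisymm μ' (SA.MS α S) (hM.2.2 μ' hμ'.1 hμ'.2.1)
      (hμ'.2.2 (SA.MS α S) hM.1 hM.2.1)
  · rw [SA.suppC_eq_col α]
    have hS'eq : S.filter (fun x => (S.filter (fun y => y ≤ x)).card ≤ (col n α 1).card)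
        = S.filter (fun y => SA.rk S y ≤ (col n α 1).card) := rfl
    constructor
    · intro hne
      obtain ⟨hcard, hfull⟩ := SA.exists_to_full α S hne
      refine ⟨hcard, ?_⟩
      rw [hS'eq, SA.setLEF_iff]
      exact ⟨SA.rk_card S _ hcard, SA.cnt_rkfilter_le S _ _ hfull⟩
    · rintro ⟨hcard, hle⟩
      rw [hS'eq, SA.setLEF_iff] at hle
      obtain ⟨hcS', hles⟩ := hle
      have hfull : ∀ x, (col n α 1).card ≤ SA.cnt (col n α 1) x + SA.lcnt S x := by
        intro x
        have e1 := SA.cnt_add_lcnt (S.filter (fun y => SA.rk S y ≤ (col n α 1).card)) x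
        have e2 : SA.lcnt (S.filter (fun y => SA.rk S y ≤ (col n α 1).card)) x ≤ SA.lcnt S x :=
          SA.lcnt_mono _ _ (Finset.filter_subset _ _) x
        have := hles x
        omega
      have hM := SA.MS_isMax α S hfull
      exact ⟨SA.MS α S, hM.1, hM.2.1⟩
end

section
/- Let α and γ be weak compositions of length n and let S ⊆ [n] satisfy |S| = |supp(α)|. Then the following are equivalent: (a) m(γ, S) exists and α ≥ 𝟙_S + m(γ, S) in Bruhat order; (b) M(α, S) exists and the composition obtained from M(α, S) by decreasing each positive entry by 1 is ≥ γ in Bruhat order. -/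
section Aux
open List

variable {n : ℕ}

/-- Sorted list of a finset of `Fin n`. -/
def sl (S : Finset (Fin n)) : List (Fin n) := Finset.sort S (· ≤ ·)

lemma sl_sorted (S : Finset (Fin n)) : (sl S).Pairwise (· < ·) :=
  List.sortedLT_iff_pairwise.mp (Finset.sortedLT_sort S)
lemma sl_sorted_le (S : Finset (Fin n)) : (sl S).Pairwise (· ≤ ·) := Finset.pairwise_sort _ _
lemma sl_nodup (S : Finset (Fin n)) : (sl S).Nodup := Finset.sort_nodup _ _
lemma sl_length (S : Finset (Fin n)) : (sl S).length = S.card := Finset.length_sort ..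
lemma mem_sl {S : Finset (Fin n)} {x : Fin n} : x ∈ sl S ↔ x ∈ S := Finset.mem_sort ..

/-- A strictly sorted list with the same members as `S` is the sorted list of `S`. -/
lemma sl_eq_of_sorted {l : List (Fin n)} (hl : l.Pairwise (· < ·)) {S : Finset (Fin n)}
    (hmem : ∀ x, x ∈ l ↔ x ∈ S) : sl S = l := by
  have hnd : l.Nodup := hl.nodup
  have hperm : (sl S).Perm l := by
    rw [List.perm_ext_iff_of_nodup (sl_nodup S) hnd]
    intro a; rw [mem_sl, hmem]
  exact List.Perm.eq_of_pairwise (fun a b _ _ h1 h2 => le_antisymm h1 h2) (sl_sorted_le S)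
    (hl.imp le_of_lt) hperm

lemma sl_get_mem {S : Finset (Fin n)} {i : ℕ} (h : i < (sl S).length) : (sl S)[i] ∈ S :=
  mem_sl.mp (List.getElem_mem h)

lemma sl_strictMono {S : Finset (Fin n)} {i j : ℕ} (hij : i < j) (hj : j < (sl S).length) :
    (sl S)[i]'(lt_trans hij hj) < (sl S)[j] :=
  List.pairwise_iff_get.mp (sl_sorted S) ⟨i, lt_trans hij hj⟩ ⟨j, hj⟩ hij

lemma sl_mono {S : Finset (Fin n)} {i j : ℕ} (hij : i ≤ j) (hj : j < (sl S).length) :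
    (sl S)[i]'(lt_of_le_of_lt hij hj) ≤ (sl S)[j] := by
  rcases eq_or_lt_of_le hij with rfl | h
  · exact le_refl _
  · exact le_of_lt (sl_strictMono h hj)

/-- Gale order (without explicit card condition). -/
def gLE (S T : Finset (Fin n)) : Prop := List.Forall₂ (· ≤ ·) (sl S) (sl T)

lemma gLE.len_eq {S T : Finset (Fin n)} (h : gLE S T) : (sl S).length = (sl T).length :=
  List.Forall₂.length_eq h

lemma gLE.card_eq {S T : Finset (Fin n)} (h : gLE S T) : S.card = T.card := by
  rw [← sl_length, ← sl_length]; exact h.len_eq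

lemma gLE_iff_get {S T : Finset (Fin n)} :
    gLE S T ↔ (sl S).length = (sl T).length ∧
      ∀ i (h₁ : i < (sl S).length) (h₂ : i < (sl T).length), (sl S)[i] ≤ (sl T)[i] := by
  rw [gLE, List.forall₂_iff_get]
  simp [List.get_eq_getElem]

lemma gLE_refl (S : Finset (Fin n)) : gLE S S := by
  rw [gLE_iff_get]; exact ⟨rfl, fun i h₁ h₂ => le_refl _⟩

lemma gLE_trans {S T U : Finset (Fin n)} (h₁ : gLE S T) (h₂ : gLE T U) : gLE S U := by
  rw [gLE_iff_get] at *
  exact ⟨h₁.1.trans h₂.1, fun i ha hb =>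
    le_trans (h₁.2 i ha (h₁.1 ▸ ha)) (h₂.2 i (h₁.1 ▸ ha) hb)⟩

lemma coeM_map_eq (l : List (Fin n)) :
    (List.map (fun i : ℕ => i + 1) ((do let a ← l; pure ((a:ℕ))) : List ℕ))
      = l.map (fun i : Fin n => (i:ℕ)+1) := by
  induction l with
  | nil => rfl
  | cons a l ih => simpa using ih

lemma jthLargestF_eq {S : Finset (Fin n)} {j : ℕ} (h : j < S.card) :
    jthLargestF n S j = ((sl S)[S.card - 1 - j]'(by rw [sl_length]; omega) : ℕ) + 1 := by
  unfold jthLargestF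
  rw [coeM_map_eq]
  show ((((sl S).reverse).map (fun i : Fin n => (i : ℕ) + 1)).getD j 0) = _
  have hlen : (((sl S).reverse).map (fun i : Fin n => (i : ℕ) + 1)).length = S.card := by
    simp [sl_length]
  rw [List.getD_eq_getElem _ _ (by rw [hlen]; exact h)]
  rw [List.getElem_map, List.getElem_reverse]
  congr 2
  simp [sl_length]

lemma getElem_congr_idx' {l : List (Fin n)} {i j : ℕ} (h : i = j) (hi : i < l.length) :
    l[i] = l[j]'(h ▸ hi) := by subst h; rfl

lemma setLEF_iff_gLE {S T : Finset (Fin n)} : setLEF n S T ↔ gLE S T := by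
  have hlS : (sl S).length = S.card := sl_length S
  have hlT : (sl T).length = T.card := sl_length T
  constructor
  · rintro ⟨hc, h⟩
    rw [gLE_iff_get]
    refine ⟨by omega, ?_⟩
    intro i h₁ h₂
    have hi : i < S.card := by omega
    have hj : S.card - 1 - i < S.card := by omega
    have h' := h _ hj
    rw [jthLargestF_eq hj, jthLargestF_eq (S := T) (by omega : S.card - 1 - i < T.card)] at h'
    rw [getElem_congr_idx' (l := sl S) (show S.card - 1 - (S.card - 1 - i) = i by omega),
      getElem_congr_idx' (l := sl T) (show T.card - 1 - (S.card - 1 - i) = i by omega)] at h'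
    exact Fin.le_def.mpr (by omega)
  · intro hg
    have hc := hg.card_eq
    rw [gLE_iff_get] at hg
    refine ⟨hc, ?_⟩
    intro j hj
    rw [jthLargestF_eq hj, jthLargestF_eq (S := T) (by omega : j < T.card)]
    have h1 : S.card - 1 - j < (sl S).length := by omega
    have := hg.2 (S.card - 1 - j) h1 (by omega)
    rw [getElem_congr_idx' (l := sl T) (show S.card - 1 - j = T.card - 1 - j by omega)] at this
    have := Fin.le_def.mp this
    omega

/-- `M` is the Gale-minimum of `{U ⊆ S : G ≤ U}`. -/
def IsMinOf (S G M : Finset (Fin n)) : Prop :=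
  M ⊆ S ∧ gLE G M ∧ ∀ U ⊆ S, gLE G U → gLE M U

/-- `N` is the Gale-maximum of `{U ⊆ S : U ≤ A}`. -/
def IsMaxOf (S A N : Finset (Fin n)) : Prop :=
  N ⊆ S ∧ gLE N A ∧ ∀ U ⊆ S, gLE U A → gLE U N

lemma zipWith_min_sorted {u v : List (Fin n)} (hu : u.Pairwise (· < ·)) (hv : v.Pairwise (· < ·)) :
    (List.zipWith min u v).Pairwise (· < ·) := by
  rw [List.pairwise_iff_get]
  intro i j hij
  simp only [List.get_eq_getElem, List.getElem_zipWith]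
  have hjl : (j : ℕ) < (List.zipWith min u v).length := j.isLt
  have hju : (j : ℕ) < u.length := lt_of_lt_of_le hjl (by rw [List.length_zipWith]; omega)
  have hjv : (j : ℕ) < v.length := lt_of_lt_of_le hjl (by rw [List.length_zipWith]; omega)
  have h1 : u[(i:ℕ)] < u[(j:ℕ)] := List.pairwise_iff_get.mp hu ⟨i, by omega⟩ ⟨j, hju⟩ hij
  have h2 : v[(i:ℕ)] < v[(j:ℕ)] := List.pairwise_iff_get.mp hv ⟨i, by omega⟩ ⟨j, hjv⟩ hij
  exact lt_min (lt_of_le_of_lt (min_le_left _ _) h1) (lt_of_le_of_lt (min_le_right _ _) h2)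

lemma sum_le_of_forall₂ {u v : List (Fin n)} (h : List.Forall₂ (· ≤ ·) u v) :
    (u.map (fun x : Fin n => (x:ℕ))).sum ≤ (v.map (fun x : Fin n => (x:ℕ))).sum := by
  induction h with
  | nil => simp
  | cons hab h ih => simp only [List.map_cons, List.sum_cons]; exact Nat.add_le_add hab ih

lemma eq_of_forall₂_sum_ge {u v : List (Fin n)} (h : List.Forall₂ (· ≤ ·) u v)
    (hs : (v.map (fun x : Fin n => (x:ℕ))).sum ≤ (u.map (fun x : Fin n => (x:ℕ))).sum) :
    u = v := by
  induction h with
  | nil => rfl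
  | cons hab h ih =>
    rename_i a b u' v'
    simp only [List.map_cons, List.sum_cons] at hs
    have h1 := sum_le_of_forall₂ h
    have hab' : (a:ℕ) = b := by omega
    have : u' = v' := ih (by omega)
    rw [this, Fin.ext hab']

lemma sl_toFinset (S : Finset (Fin n)) : (sl S).toFinset = S := by
  ext x; rw [List.mem_toFinset, mem_sl]

lemma sum_eq_sl_sum (S : Finset (Fin n)) :
    ∑ x ∈ S, (x:ℕ) = ((sl S).map (fun x : Fin n => (x:ℕ))).sum := by
  rw [← sl_toFinset S, List.sum_toFinset _ (sl_nodup S)]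
  rw [sl_toFinset]

end Aux
section Aux2
open List

variable {n : ℕ}

lemma exists_min (S G : Finset (Fin n)) (hne : ∃ U, U ⊆ S ∧ gLE G U) :
    ∃ M, IsMinOf S G M := by
  classical
  obtain ⟨U₀, hU₀S, hGU₀⟩ := hne
  let F : Finset (Finset (Fin n)) := S.powerset.filter (fun U => gLE G U)
  have hmemF : ∀ {U : Finset (Fin n)}, U ∈ F ↔ U ⊆ S ∧ gLE G U := by
    intro U; simp [F, Finset.mem_filter, Finset.mem_powerset]
  obtain ⟨M, hMF, hmin⟩ := F.exists_min_image (fun U => ∑ x ∈ U, (x:ℕ))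
    ⟨U₀, hmemF.mpr ⟨hU₀S, hGU₀⟩⟩
  obtain ⟨hMS, hGM⟩ := hmemF.mp hMF
  refine ⟨M, hMS, hGM, ?_⟩
  intro U hUS hGU
  have hlu : (sl G).length = (sl M).length := hGM.len_eq
  have hlv : (sl G).length = (sl U).length := hGU.len_eq
  set u := sl M with hu
  set v := sl U with hv
  set w := List.zipWith min u v with hw
  have hws : w.Pairwise (· < ·) := zipWith_min_sorted (sl_sorted M) (sl_sorted U)
  have hwlen : w.length = u.length := by rw [hw, List.length_zipWith]; omega
  set W := w.toFinset with hW
  have hslW : sl W = w := sl_eq_of_sorted hws (fun x => (List.mem_toFinset).symm)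
  have hgetw : ∀ (i : ℕ) (hi : i < w.length), w[i] = min (u[i]'(by omega)) (v[i]'(by omega)) := by
    intro i hi
    show (List.zipWith min u v)[i]'(by rw [← hw]; exact hi) = _
    exact List.getElem_zipWith
  have hWS : W ⊆ S := by
    intro x hx
    rw [hW, List.mem_toFinset] at hx
    obtain ⟨i, hi, rfl⟩ := List.mem_iff_getElem.mp hx
    rw [hgetw i hi]
    rcases min_choice (u[i]'(by omega)) (v[i]'(by omega)) with h | h <;> rw [h]
    · exact hMS (sl_get_mem _)
    · exact hUS (sl_get_mem _)
  have hGrw := gLE_iff_get.mp hGM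
  have hGrv := gLE_iff_get.mp hGU
  have hGW : gLE G W := by
    rw [gLE_iff_get, hslW]
    refine ⟨by omega, ?_⟩
    intro i h₁ h₂
    rw [hgetw i h₂]
    exact le_min (hGrw.2 i h₁ (by omega)) (hGrv.2 i h₁ (by omega))
  have hWM : gLE W M := by
    rw [gLE_iff_get, hslW]
    refine ⟨by omega, ?_⟩
    intro i h₁ h₂
    rw [hgetw i h₁]
    exact min_le_left _ _
  have hWU : gLE W U := by
    rw [gLE_iff_get, hslW]
    refine ⟨by omega, ?_⟩
    intro i h₁ h₂
    rw [hgetw i h₁]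
    exact min_le_right _ _
  have hsum := hmin W (hmemF.mpr ⟨hWS, hGW⟩)
  rw [sum_eq_sl_sum, sum_eq_sl_sum, hslW] at hsum
  have : sl W = sl M := by rw [hslW]; exact eq_of_forall₂_sum_ge (hslW ▸ hWM) hsum
  have hMU : gLE M U := by rw [gLE, ← this, hslW]; exact hslW ▸ hWU
  exact hMU

lemma min_replace {S G M : Finset (Fin n)} (h : IsMinOf S G M) {j : ℕ}
    (hj : j < (sl M).length) (hjG : j < (sl G).length) {x : Fin n} (hxS : x ∈ S)
    (hg : (sl G)[j] ≤ x) (hlt : x < (sl M)[j])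
    (hprev : 0 < j → (sl M)[j-1]'(by omega) < x) : False := by
  set m := sl M with hm
  set l := m.set j x with hl
  have hlen : l.length = m.length := by rw [hl, List.length_set]
  have hgetl : ∀ (i : ℕ) (hi : i < l.length), l[i] = if i = j then x else m[i]'(by omega) := by
    intro i hi
    show (m.set j x)[i]'(by rwa [hl] at hi) = _
    rw [List.getElem_set]
    by_cases hij : i = j
    · rw [if_pos hij.symm, if_pos hij]
    · rw [if_neg (fun hh => hij hh.symm), if_neg hij]
  have hls : l.Pairwise (· < ·) := by
    rw [List.pairwise_iff_get]
    intro a b hab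
    simp only [List.get_eq_getElem]
    rw [hgetl a (by omega), hgetl b b.isLt]
    have ha : (a:ℕ) < m.length := by have := b.isLt; omega
    have hb : (b:ℕ) < m.length := by have := b.isLt; omega
    by_cases h1 : (a:ℕ) = j <;> by_cases h2 : (b:ℕ) = j
    · omega
    · rw [if_pos h1, if_neg h2]
      calc x < m[j] := hlt
        _ ≤ m[(b:ℕ)] := sl_mono (by omega) hb
    · rw [if_neg h1, if_pos h2]
      have h3 : (a:ℕ) ≤ j - 1 := by omega
      calc m[(a:ℕ)] ≤ m[j-1]'(by omega) := sl_mono h3 (by omega)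
        _ < x := hprev (by omega)
    · rw [if_neg h1, if_neg h2]
      exact sl_strictMono hab hb
  set W := l.toFinset with hW
  have hslW : sl W = l := sl_eq_of_sorted hls (fun y => (List.mem_toFinset).symm)
  have hWS : W ⊆ S := by
    intro y hy
    rw [hW, List.mem_toFinset] at hy
    obtain ⟨i, hi, rfl⟩ := List.mem_iff_getElem.mp hy
    rw [hgetl i hi]
    by_cases hij : i = j
    · rw [if_pos hij]; exact hxS
    · rw [if_neg hij]; exact h.1 (sl_get_mem _)
  have hGlen : (sl G).length = m.length := h.2.1.len_eq
  have hGl := gLE_iff_get.mp h.2.1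
  have hGW : gLE G W := by
    rw [gLE, hslW, List.forall₂_iff_get]
    refine ⟨by omega, ?_⟩
    intro i h₁ h₂
    simp only [List.get_eq_getElem]
    rw [hgetl i h₂]
    by_cases hij : i = j
    · rw [if_pos hij]; subst hij; exact hg
    · rw [if_neg hij]; exact hGl.2 i h₁ (by omega)
  have hMW := h.2.2 W hWS hGW
  rw [gLE, hslW, List.forall₂_iff_get] at hMW
  have hfin := hMW.2 j (by omega) (by omega)
  simp only [List.get_eq_getElem] at hfin
  rw [hgetl j (by omega), if_pos rfl] at hfin
  exact absurd (lt_of_le_of_lt hfin hlt) (lt_irrefl _)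

lemma min_GP {S G M : Finset (Fin n)} (h : IsMinOf S G M) {j : ℕ}
    (hj : j < (sl M).length) (hjG : j < (sl G).length) {x : Fin n} (hxS : x ∈ S)
    (hlt : x < (sl M)[j]) (hprev : 0 < j → (sl M)[j-1]'(by omega) < x) :
    x < (sl G)[j] :=
  lt_of_not_ge fun hge => min_replace h hj hjG hxS hge hlt hprev

lemma sl_sublist {S T : Finset (Fin n)} (h : S ⊆ T) : (sl S).Sublist (sl T) :=
  List.sublist_of_subperm_of_pairwise
    ((sl_nodup S).subperm (fun x hx => mem_sl.mpr (h (mem_sl.mp hx))))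
    (sl_sorted_le S) (sl_sorted_le T)

lemma orderEmb_le {a b : ℕ} (f : Fin a ↪o Fin b) (j : Fin a) : (j:ℕ) ≤ (f j : ℕ) := by
  have : ∀ m : ℕ, ∀ j : Fin a, (j:ℕ) = m → (j:ℕ) ≤ (f j : ℕ) := by
    intro m
    induction m using Nat.strong_induction_on with
    | _ m ih =>
      intro j hj
      rcases Nat.eq_zero_or_pos m with h0 | h0
      · have := Nat.zero_le ((f j : ℕ)); omega
      · have hj' : m - 1 < a := by have := j.isLt; omega
        have h1 := ih (m-1) (by omega) ⟨m-1, hj'⟩ rfl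
        have h2 : f ⟨m-1, hj'⟩ < f j := f.strictMono (by rw [Fin.mk_lt_mk]; omega)
        rw [Fin.lt_def] at h2
        have h1' : m - 1 ≤ ((f ⟨m-1, hj'⟩ : Fin b) : ℕ) := by simpa using h1
        omega
  exact this _ j rfl
lemma min_nested {S G G' M M' : Finset (Fin n)} (hsub : G' ⊆ G)
    (h : IsMinOf S G M) (h' : IsMinOf S G' M') : M' ⊆ M := by
  have hGM := h.2.1
  have hG'M' := h'.2.1
  have hlenGM : (sl G).length = (sl M).length := hGM.len_eq
  have hlenG'M' : (sl G').length = (sl M').length := hG'M'.len_eq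
  have hgetGM := (gLE_iff_get.mp hGM).2
  have hgetG'M' := (gLE_iff_get.mp hG'M').2
  obtain ⟨f, hf⟩ := List.sublist_iff_exists_fin_orderEmbedding_get_eq.mp (sl_sublist hsub)
  have main : ∀ m : ℕ, ∀ j : ℕ, ∀ hj : j < (sl M').length, j = m →
      ∃ p : ℕ, ∃ hp : p < (sl M).length,
        p ≤ ((f ⟨j, by omega⟩ : Fin (sl G).length) : ℕ) ∧ (sl M')[j] = (sl M)[p] := by
    intro m
    induction m using Nat.strong_induction_on with
    | _ m ih =>
    intro j hj hjm
    have hjG' : j < (sl G').length := by omega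
    set jG : Fin (sl G').length := ⟨j, hjG'⟩ with hjGdef
    set lj : ℕ := ((f jG : Fin (sl G).length) : ℕ) with hljdef
    have hljlt : lj < (sl M).length := by rw [← hlenGM]; exact (f jG).isLt
    have hjlelj : j ≤ lj := orderEmb_le f jG
    have hg'g : (sl G')[j] = (sl G)[lj] := by
      have := hf jG; simpa [List.get_eq_getElem] using this
    have hgj : (sl G')[j] ≤ (sl M')[j] := hgetG'M' j hjG' hj
    have hprevP : 0 < j → ∃ p₀, ∃ hp₀ : p₀ < (sl M).length,
        p₀ < lj ∧ (sl M')[j-1]'(by omega) = (sl M)[p₀] := by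
      intro h0
      obtain ⟨p₀, hp₀, hple, heq⟩ := ih (j-1) (by omega) (j-1) (by omega) rfl
      have hmono : ((f ⟨j-1, by omega⟩ : Fin (sl G).length) : ℕ) < lj := by
        have := f.strictMono (show (⟨j-1, by omega⟩ : Fin (sl G').length) < jG from
          Fin.mk_lt_mk.mpr (by omega))
        rw [Fin.lt_def] at this
        exact this
      exact ⟨p₀, hp₀, by omega, heq⟩
    by_cases hE : ∃ p, ∃ hp : p < (sl M).length, p ≤ lj ∧ (sl M')[j] = (sl M)[p]
    · obtain ⟨p, hp, hple, heq⟩ := hE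
      exact ⟨p, hp, hple, heq⟩
    · exfalso
      push_neg at hE
      have A : ∀ q : ℕ, ∀ hq : q < (sl M).length, q ≤ lj → (sl M)[q] < (sl M')[j] := by
        intro q
        induction q using Nat.strong_induction_on with
        | _ q ihq =>
        intro hq hqlj
        rcases lt_trichotomy ((sl M)[q]) ((sl M')[j]) with hlt | heq | hgt
        · exact hlt
        · exact absurd heq.symm (hE q hq hqlj)
        · exfalso
          have hxS : (sl M')[j] ∈ S := h'.1 (sl_get_mem hj)
          have hprev : 0 < q → (sl M)[q-1]'(by omega) < (sl M')[j] :=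
            fun h0 => ihq (q-1) (by omega) (by omega) (by omega)
          have hGP := min_GP h hq (by omega) hxS hgt hprev
          have h2 : (sl G)[q]'(by omega) ≤ (sl G)[lj]'(by omega) := sl_mono hqlj (by omega)
          have h3 : (sl G)[lj]'(by omega) ≤ (sl M')[j] := by rw [← hg'g]; exact hgj
          exact absurd (lt_of_lt_of_le hGP (le_trans h2 h3)) (lt_irrefl _)
      apply min_replace h' hj hjG' (x := (sl M)[lj]) (h.1 (sl_get_mem hljlt))
      · rw [hg'g]; exact hgetGM lj (by omega) hljlt
      · exact A lj hljlt (le_refl _)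
      · intro h0
        obtain ⟨p₀, hp₀, hplt, heq⟩ := hprevP h0
        rw [heq]
        exact sl_strictMono hplt hljlt
  intro y hy
  obtain ⟨j, hj, hy'⟩ := List.mem_iff_getElem.mp (mem_sl.mpr hy)
  obtain ⟨p, hp, _, heq⟩ := main j j hj rfl
  rw [← hy', heq]
  exact mem_sl.mp (List.getElem_mem hp)

lemma push_min {G' G M : Finset (Fin n)} (hsub : G' ⊆ G) (hGM : gLE G M) :
    ∃ U, U ⊆ M ∧ gLE G' U := by
  obtain ⟨f, hf⟩ := List.sublist_iff_exists_fin_orderEmbedding_get_eq.mp (sl_sublist hsub)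
  have hlen : (sl G).length = (sl M).length := hGM.len_eq
  have hget := (gLE_iff_get.mp hGM).2
  set u' : List (Fin n) := List.ofFn (fun j : Fin (sl G').length =>
    (sl M)[((f j : Fin (sl G).length) : ℕ)]'(by rw [← hlen]; exact (f j).isLt)) with hu'
  have hlen' : u'.length = (sl G').length := by rw [hu', List.length_ofFn]
  have hget' : ∀ (i : ℕ) (hi : i < u'.length),
      u'[i] = (sl M)[((f ⟨i, by omega⟩ : Fin (sl G).length) : ℕ)]'(by
        rw [← hlen]; exact (f ⟨i, by omega⟩).isLt) := by
    intro i hi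
    show (List.ofFn (fun j : Fin (sl G').length =>
      (sl M)[((f j : Fin (sl G).length) : ℕ)]'(by rw [← hlen]; exact (f j).isLt)))[i]'(by
        rw [List.length_ofFn]; omega) = _
    rw [List.getElem_ofFn]
  have hs : u'.Pairwise (· < ·) := by
    rw [List.pairwise_iff_get]
    intro a b hab
    simp only [List.get_eq_getElem]
    rw [hget' a (by omega), hget' b b.isLt]
    apply sl_strictMono
    have := f.strictMono (show (⟨(a:ℕ), by omega⟩ : Fin (sl G').length) < ⟨(b:ℕ), by omega⟩ by
      rw [Fin.mk_lt_mk]; exact hab)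
    rw [Fin.lt_def] at this
    exact this
  have hslU : sl u'.toFinset = u' := sl_eq_of_sorted hs (fun y => (List.mem_toFinset).symm)
  refine ⟨u'.toFinset, ?_, ?_⟩
  · intro y hy
    obtain ⟨i, hi, hy'⟩ := List.mem_iff_getElem.mp (List.mem_toFinset.mp hy)
    rw [← hy', hget' i hi]
    exact mem_sl.mp (List.getElem_mem _)
  · rw [gLE, hslU, List.forall₂_iff_get]
    refine ⟨by omega, ?_⟩
    intro i h₁ h₂
    simp only [List.get_eq_getElem]
    rw [hget' i h₂]
    have he : (sl G')[i] = (sl G)[((f ⟨i, by omega⟩ : Fin (sl G).length) : ℕ)]'(by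
        exact (f ⟨i, by omega⟩).isLt) := by
      have := hf ⟨i, h₁⟩; simpa [List.get_eq_getElem] using this
    rw [he]
    exact hget _ _ _
def revF (S : Finset (Fin n)) : Finset (Fin n) := S.image Fin.rev

lemma mem_revF {S : Finset (Fin n)} {x : Fin n} : x ∈ revF S ↔ x.rev ∈ S := by
  simp only [revF, Finset.mem_image]
  constructor
  · rintro ⟨a, ha, rfl⟩; simpa [Fin.rev_rev] using ha
  · intro h; exact ⟨x.rev, h, Fin.rev_rev x⟩

lemma revF_revF (S : Finset (Fin n)) : revF (revF S) = S := by
  ext x; simp [mem_revF, Fin.rev_rev]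

lemma revF_subset {S T : Finset (Fin n)} (h : S ⊆ T) : revF S ⊆ revF T := by
  intro x hx; rw [mem_revF] at *; exact h hx

lemma revF_subset_iff {S T : Finset (Fin n)} : revF S ⊆ revF T ↔ S ⊆ T := by
  constructor
  · intro h
    have := revF_subset h
    rwa [revF_revF, revF_revF] at this
  · exact revF_subset

lemma sl_revF (S : Finset (Fin n)) : sl (revF S) = ((sl S).map Fin.rev).reverse := by
  apply sl_eq_of_sorted
  · rw [List.pairwise_reverse, List.pairwise_map]
    exact (sl_sorted S).imp (fun {a b} h => by
      show b.rev < a.rev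
      exact Fin.rev_lt_rev.mpr h)
  · intro x
    rw [List.mem_reverse, List.mem_map]
    constructor
    · rintro ⟨a, ha, rfl⟩
      rw [mem_revF, Fin.rev_rev]
      exact mem_sl.mp ha
    · intro hx
      exact ⟨x.rev, mem_sl.mpr (mem_revF.mp hx), Fin.rev_rev x⟩

lemma gLE_rev {S T : Finset (Fin n)} : gLE S T ↔ gLE (revF T) (revF S) := by
  rw [gLE, gLE, sl_revF, sl_revF, List.forall₂_reverse_iff, List.forall₂_map_left_iff,
    List.forall₂_map_right_iff]
  constructor
  · intro h
    have h' : List.Forall₂ (fun a b => b ≤ a) (sl T) (sl S) :=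
      List.Forall₂.flip (R := fun a b => b ≤ a) h
    exact h'.imp (fun {a b} hab => Fin.rev_le_rev.mpr hab)
  · intro h
    have h' : List.Forall₂ (flip (· ≤ ·)) (sl T) (sl S) :=
      h.imp (fun {a b} hab => Fin.rev_le_rev.mp hab)
    exact List.Forall₂.flip h'

lemma isMaxOf_rev {S A N : Finset (Fin n)} :
    IsMaxOf S A N ↔ IsMinOf (revF S) (revF A) (revF N) := by
  constructor
  · rintro ⟨h1, h2, h3⟩
    refine ⟨revF_subset h1, gLE_rev.mp h2, ?_⟩
    intro V hVS hAV
    have hV : revF V ⊆ S := by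
      rw [← revF_revF S]; exact revF_subset hVS
    have hVA : gLE (revF V) A := by rw [gLE_rev, revF_revF]; exact hAV
    have hfin := h3 (revF V) hV hVA
    rw [gLE_rev, revF_revF] at hfin
    exact hfin
  · rintro ⟨h1, h2, h3⟩
    refine ⟨revF_subset_iff.mp h1, gLE_rev.mpr h2, ?_⟩
    intro U hUS hUA
    have := h3 (revF U) (revF_subset hUS) (gLE_rev.mp hUA)
    rw [gLE_rev]
    exact this

lemma exists_max (S A : Finset (Fin n)) (hne : ∃ U, U ⊆ S ∧ gLE U A) :
    ∃ N, IsMaxOf S A N := by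
  obtain ⟨U, hUS, hUA⟩ := hne
  obtain ⟨M, hM⟩ := exists_min (revF S) (revF A) ⟨revF U, revF_subset hUS, gLE_rev.mp hUA⟩
  refine ⟨revF M, isMaxOf_rev.mpr ?_⟩
  rwa [revF_revF]

lemma max_nested {S A A' N N' : Finset (Fin n)} (hsub : A' ⊆ A)
    (h : IsMaxOf S A N) (h' : IsMaxOf S A' N') : N' ⊆ N := by
  have := min_nested (revF_subset hsub) (isMaxOf_rev.mp h) (isMaxOf_rev.mp h')
  exact revF_subset_iff.mp this

lemma push_max {A' A M : Finset (Fin n)} (hsub : A' ⊆ A) (hMA : gLE M A) :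
    ∃ U, U ⊆ M ∧ gLE U A' := by
  obtain ⟨U', hU'M, hU'⟩ := push_min (revF_subset hsub) (gLE_rev.mp hMA)
  refine ⟨revF U', ?_, ?_⟩
  · rw [← revF_revF M]; exact revF_subset hU'M
  · rw [gLE_rev]
    rwa [revF_revF]
lemma mem_col {δ : Fin n → ℕ} {c : ℕ} {i : Fin n} : i ∈ col n δ c ↔ c ≤ δ i := by
  simp [col]

lemma col_anti {δ : Fin n → ℕ} {c c' : ℕ} (h : c ≤ c') : col n δ c' ⊆ col n δ c := by
  intro i hi; rw [mem_col] at *; omega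

lemma suppC_eq_col1 {δ : Fin n → ℕ} : suppC n δ = col n δ 1 := by
  ext i; simp [suppC, col]; omega

lemma col_large {δ : Fin n → ℕ} {c : ℕ} (h : Finset.univ.sup δ < c) : col n δ c = ∅ := by
  ext i
  simp only [mem_col, Finset.notMem_empty, iff_false]
  have : δ i ≤ Finset.univ.sup δ := Finset.le_sup (Finset.mem_univ i)
  omega

/-- Reconstruct a weak composition from a nested chain of columns. -/
def chainToComp (N : ℕ → Finset (Fin n)) (B : ℕ) : Fin n → ℕ :=
  fun i => ((Finset.Icc 1 B).filter (fun c => i ∈ N c)).card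

lemma chain_down {N : ℕ → Finset (Fin n)} (hnest : ∀ c, 1 ≤ c → N (c+1) ⊆ N c)
    {i : Fin n} {a b : ℕ} (ha : 1 ≤ a) (hab : a ≤ b) (hib : i ∈ N b) : i ∈ N a := by
  have key : ∀ d : ℕ, i ∈ N (a + d) → i ∈ N a := by
    intro d
    induction d with
    | zero => intro h; simpa using h
    | succ d ihd =>
      intro hmem
      exact ihd (hnest (a+d) (by omega) (by rwa [show a + d + 1 = a + (d+1) by omega]))
  have hb : b = a + (b - a) := by omega
  exact key (b-a) (by rwa [← hb])

lemma col_chainToComp {N : ℕ → Finset (Fin n)} {B : ℕ}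
    (hnest : ∀ c, 1 ≤ c → N (c+1) ⊆ N c) (hempty : ∀ c, B < c → N c = ∅)
    {c : ℕ} (hc : 1 ≤ c) : col n (chainToComp N B) c = N c := by
  ext i
  rw [mem_col, chainToComp]
  constructor
  · intro hcard
    set T := (Finset.Icc 1 B).filter (fun c => i ∈ N c) with hT
    have hTne : T.Nonempty := Finset.card_pos.mp (by omega)
    set m := T.max' hTne with hm
    have hmT : m ∈ T := T.max'_mem hTne
    have hsub : T ⊆ Finset.Icc 1 m := by
      intro x hx
      have h1 := Finset.mem_Icc.mp (Finset.mem_filter.mp hx).1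
      exact Finset.mem_Icc.mpr ⟨h1.1, T.le_max' x hx⟩
    have hcm : T.card ≤ m := le_trans (Finset.card_le_card hsub) (by simp [Nat.card_Icc])
    have hcmle : c ≤ m := by omega
    exact chain_down hnest hc hcmle (Finset.mem_filter.mp hmT).2
  · intro hi
    have hcB : c ≤ B := by
      by_contra hh
      rw [hempty c (by omega)] at hi
      exact absurd hi (Finset.notMem_empty i)
    have hsub : Finset.Icc 1 c ⊆ (Finset.Icc 1 B).filter (fun c => i ∈ N c) := by
      intro x hx
      rw [Finset.mem_Icc] at hx
      refine Finset.mem_filter.mpr ⟨Finset.mem_Icc.mpr ⟨hx.1, by omega⟩, ?_⟩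
      exact chain_down hnest hx.1 hx.2 hi
    calc c = (Finset.Icc 1 c).card := by simp [Nat.card_Icc]
      _ ≤ _ := Finset.card_le_card hsub

lemma col_ind_one {S : Finset (Fin n)} {μ : Fin n → ℕ} (hsupp : suppC n μ ⊆ S) :
    col n (fun i => (if i ∈ S then 1 else 0) + μ i) 1 = S := by
  ext i
  rw [mem_col]
  by_cases hi : i ∈ S
  · simp [hi]
  · have h0 : ¬ 0 < μ i := fun h => hi (hsupp (by simp [suppC, h]))
    simp [hi]
    omega

lemma col_ind_succ {S : Finset (Fin n)} {μ : Fin n → ℕ} (hsupp : suppC n μ ⊆ S)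
    {c : ℕ} (hc : 1 ≤ c) :
    col n (fun i => (if i ∈ S then 1 else 0) + μ i) (c+1) = col n μ c := by
  ext i
  rw [mem_col, mem_col]
  by_cases hi : i ∈ S
  · simp [hi]; omega
  · have h0 : ¬ 0 < μ i := fun h => hi (hsupp (by simp [suppC, h]))
    simp [hi]
    omega

lemma col_bar {ν : Fin n → ℕ} {c : ℕ} (hc : 1 ≤ c) :
    col n (fun i => ν i - 1) c = col n ν (c+1) := by
  ext i
  rw [mem_col, mem_col]
  omega

/-- The common condition `P`. -/
def P5 (n : ℕ) (α γ : Fin n → ℕ) (S : Finset (Fin n)) : Prop :=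
  setLEF n S (col n α 1) ∧ ∀ c, 1 ≤ c → ∃ U, U ⊆ S ∧
    setLEF n (col n γ c) U ∧ setLEF n U (col n α (c+1))
lemma left_toP {α γ : Fin n → ℕ} {S : Finset (Fin n)}
    (h : ∃ μ : Fin n → ℕ, isBruhatMin n γ S μ ∧
      bruhatLE n (fun i => (if i ∈ S then 1 else 0) + μ i) α) : P5 n α γ S := by
  obtain ⟨μ, ⟨hγμ, hμS, _⟩, hle⟩ := h
  constructor
  · have h1 := hle 1 le_rfl
    rwa [col_ind_one hμS] at h1
  · intro c hc
    refine ⟨col n μ c, ?_, hγμ c hc, ?_⟩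
    · intro i hi
      exact hμS (by rw [suppC_eq_col1]; exact col_anti hc hi)
    · have h1 := hle (c+1) (by omega)
      rwa [col_ind_succ hμS hc] at h1

lemma right_toP {α γ : Fin n → ℕ} {S : Finset (Fin n)}
    (hS : S.card = (suppC n α).card)
    (h : ∃ ν : Fin n → ℕ, isBruhatMax n α S ν ∧
      bruhatLE n γ (fun i => ν i - 1)) : P5 n α γ S := by
  obtain ⟨ν, ⟨hνα, hνS, _⟩, hγbar⟩ := h
  have hsub1 : col n ν 1 ⊆ S := by rw [← suppC_eq_col1]; exact hνS
  have hcard : (col n ν 1).card = S.card := by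
    have := (hνα 1 le_rfl).1
    rw [hS, suppC_eq_col1]
    exact this
  have hc1 : col n ν 1 = S :=
    Finset.eq_of_subset_of_card_le hsub1 (le_of_eq hcard.symm)
  constructor
  · have h1 := hνα 1 le_rfl
    rwa [hc1] at h1
  · intro c hc
    refine ⟨col n ν (c+1), ?_, ?_, hνα (c+1) (by omega)⟩
    · rw [← hc1]; exact col_anti (by omega)
    · have h1 := hγbar c hc
      rwa [col_bar hc] at h1

lemma P_toLeft {α γ : Fin n → ℕ} {S : Finset (Fin n)} (hP : P5 n α γ S) :
    ∃ μ : Fin n → ℕ, isBruhatMin n γ S μ ∧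
      bruhatLE n (fun i => (if i ∈ S then 1 else 0) + μ i) α := by
  classical
  have hEx : ∀ c, 1 ≤ c → ∃ M, IsMinOf S (col n γ c) M := by
    intro c hc
    obtain ⟨U, hUS, hγU, _⟩ := hP.2 c hc
    exact exists_min S _ ⟨U, hUS, setLEF_iff_gLE.mp hγU⟩
  set M : ℕ → Finset (Fin n) := fun c =>
    if hc : 1 ≤ c then (hEx c hc).choose else ∅ with hMdef
  have hM : ∀ c, 1 ≤ c → IsMinOf S (col n γ c) (M c) := by
    intro c hc
    rw [hMdef]
    simp only [dif_pos hc]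
    exact (hEx c hc).choose_spec
  set B := Finset.univ.sup γ with hB
  have hMempty : ∀ c, B < c → M c = ∅ := by
    intro c hc
    have h1 := hM c (by omega)
    rw [col_large hc] at h1
    have h2 := h1.2.1.card_eq
    simp only [Finset.card_empty] at h2
    exact Finset.card_eq_zero.mp h2.symm
  have hnest : ∀ c, 1 ≤ c → M (c+1) ⊆ M c := fun c hc =>
    min_nested (col_anti (by omega)) (hM c hc) (hM (c+1) (by omega))
  set μ := chainToComp M B with hμdef
  have hcolμ : ∀ c, 1 ≤ c → col n μ c = M c := fun c hc =>
    col_chainToComp hnest hMempty hc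
  have hsupp : suppC n μ ⊆ S := by
    rw [suppC_eq_col1, hcolμ 1 le_rfl]; exact (hM 1 le_rfl).1
  refine ⟨μ, ⟨?_, hsupp, ?_⟩, ?_⟩
  · intro c hc
    rw [setLEF_iff_gLE, hcolμ c hc]
    exact (hM c hc).2.1
  · intro δ hγδ hδS c hc
    rw [setLEF_iff_gLE, hcolμ c hc]
    apply (hM c hc).2.2
    · intro i hi
      exact hδS (by rw [suppC_eq_col1]; exact col_anti hc hi)
    · exact setLEF_iff_gLE.mp (hγδ c hc)
  · intro c hc
    by_cases hc1 : c = 1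
    · subst hc1
      rw [col_ind_one hsupp]
      exact hP.1
    · have hc2 : 1 ≤ c - 1 := by omega
      have hceq : c = (c-1)+1 := by omega
      rw [hceq, col_ind_succ hsupp hc2, hcolμ (c-1) hc2]
      obtain ⟨U, hUS, hγU, hUα⟩ := hP.2 (c-1) hc2
      rw [setLEF_iff_gLE]
      exact gLE_trans ((hM (c-1) hc2).2.2 U hUS (setLEF_iff_gLE.mp hγU))
        (setLEF_iff_gLE.mp hUα)

lemma P_toRight {α γ : Fin n → ℕ} {S : Finset (Fin n)}
    (hS : S.card = (suppC n α).card) (hP : P5 n α γ S) :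
    ∃ ν : Fin n → ℕ, isBruhatMax n α S ν ∧ bruhatLE n γ (fun i => ν i - 1) := by
  classical
  have hSA1 : gLE S (col n α 1) := setLEF_iff_gLE.mp hP.1
  have hEx : ∀ c, 1 ≤ c → ∃ N, IsMaxOf S (col n α c) N := by
    intro c hc
    obtain ⟨U, hUS, hU⟩ := push_max (col_anti hc) hSA1
    exact exists_max S _ ⟨U, hUS, hU⟩
  set N : ℕ → Finset (Fin n) := fun c =>
    if hc : 1 ≤ c then (hEx c hc).choose else ∅ with hNdef
  have hN : ∀ c, 1 ≤ c → IsMaxOf S (col n α c) (N c) := by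
    intro c hc
    rw [hNdef]
    simp only [dif_pos hc]
    exact (hEx c hc).choose_spec
  set B := Finset.univ.sup α with hB
  have hNempty : ∀ c, B < c → N c = ∅ := by
    intro c hc
    have h1 := hN c (by omega)
    rw [col_large hc] at h1
    have h2 := h1.2.1.card_eq
    simp only [Finset.card_empty] at h2
    exact Finset.card_eq_zero.mp h2
  have hnest : ∀ c, 1 ≤ c → N (c+1) ⊆ N c := fun c hc =>
    max_nested (col_anti (by omega)) (hN c hc) (hN (c+1) (by omega))
  set ν := chainToComp N B with hνdef
  have hcolν : ∀ c, 1 ≤ c → col n ν c = N c := fun c hc =>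
    col_chainToComp hnest hNempty hc
  have hsupp : suppC n ν ⊆ S := by
    rw [suppC_eq_col1, hcolν 1 le_rfl]; exact (hN 1 le_rfl).1
  refine ⟨ν, ⟨?_, hsupp, ?_⟩, ?_⟩
  · intro c hc
    rw [setLEF_iff_gLE, hcolν c hc]
    exact (hN c hc).2.1
  · intro δ hδα hδS c hc
    rw [setLEF_iff_gLE, hcolν c hc]
    apply (hN c hc).2.2
    · intro i hi
      exact hδS (by rw [suppC_eq_col1]; exact col_anti hc hi)
    · exact setLEF_iff_gLE.mp (hδα c hc)
  · intro c hc
    rw [setLEF_iff_gLE, col_bar hc, hcolν (c+1) (by omega)]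
    obtain ⟨U, hUS, hγU, hUα⟩ := hP.2 c hc
    exact gLE_trans (setLEF_iff_gLE.mp hγU)
      ((hN (c+1) (by omega)).2.2 U hUS (setLEF_iff_gLE.mp hUα))

end Aux2


/-- for `|S| = |supp α|`: `m(γ,S)` exists with `α ≥ 𝟙_S + m(γ,S)` iff
`M(α,S)` exists with `M(α,S)‾ ≥ γ` (bar = decrease positive entries by 1). -/
theorem stmt5 (n : ℕ) (α γ : Fin n → ℕ) (S : Finset (Fin n))
    (hS : S.card = (suppC n α).card) :
    (∃ μ : Fin n → ℕ, isBruhatMin n γ S μ ∧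
      bruhatLE n (fun i => (if i ∈ S then 1 else 0) + μ i) α) ↔
    (∃ μ : Fin n → ℕ, isBruhatMax n α S μ ∧
      bruhatLE n γ (fun i => μ i - 1)) := by
  constructor
  · intro h
    exact P_toRight hS (left_toP h)
  · intro h
    exact P_toLeft (right_toP hS h)
end

section
/- Let α, γ be weak compositions of length n with supp(α) = supp(γ). Then γ ≤ α in Bruhat order if and only if γ̄ ≤ ᾱ in Bruhat order, where β̄ denotes the composition obtained from β by decreasing each positive entry by 1. -/
lemma col_sub_one (n : ℕ) (β : Fin n → ℕ) (c : ℕ) (hc : 1 ≤ c) :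
    col n (fun i => β i - 1) c = col n β (c+1) := by
  ext i; simp only [col, Finset.mem_filter, Finset.mem_univ, true_and]; omega

lemma setLEF_refl (n : ℕ) (S : Finset (Fin n)) : setLEF n S S :=
  ⟨rfl, fun _ _ => le_refl _⟩

/-- for `supp α = supp γ`, `γ ≤ α` in Bruhat order iff `γ̄ ≤ ᾱ`. -/
theorem stmt6 (n : ℕ) (α γ : Fin n → ℕ) (h : suppC n γ = suppC n α) :
    bruhatLE n γ α ↔ bruhatLE n (fun i => γ i - 1) (fun i => α i - 1) := by
  constructor
  · intro hb c hc
    rw [col_sub_one n γ c hc, col_sub_one n α c hc]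
    exact hb (c+1) (by omega)
  · intro hb c hc
    rcases eq_or_lt_of_le hc with h1 | h2
    · have : col n γ c = col n α c := by
        ext i
        have := Finset.ext_iff.mp h i
        simp only [suppC, col, Finset.mem_filter, Finset.mem_univ, true_and] at this ⊢
        omega
      rw [this]; exact setLEF_refl n _
    · have := hb (c-1) (by omega)
      rw [col_sub_one n γ (c-1) (by omega), col_sub_one n α (c-1) (by omega)] at this
      have hcc : c - 1 + 1 = c := by omega
      rwa [hcc] at this
end

section
/- Let α, γ be weak compositions of length n with supp(α) = supp(γ). Then γ ⪯ α in the left swap order if and only if γ̄ ⪯ ᾱ in the left swap order, where β̄ is obtained from β by decreasing each positive entry by 1. -/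
namespace S7

variable {n : ℕ}

/-- number of positions `k < m` with `b k ≥ c`. -/
def cnt (n : ℕ) (b : Fin n → ℕ) (c m : ℕ) : ℕ :=
  ∑ k : Fin n, if (k : ℕ) < m ∧ c ≤ b k then 1 else 0

lemma cnt_succ (b : Fin n → ℕ) (c : ℕ) (i : Fin n) :
    cnt n b c ((i : ℕ) + 1) = cnt n b c i + (if c ≤ b i then 1 else 0) := by
  unfold cnt
  have key : ∀ k : Fin n, (if (k : ℕ) < (i : ℕ) + 1 ∧ c ≤ b k then 1 else 0)
      = (if (k : ℕ) < (i : ℕ) ∧ c ≤ b k then 1 else 0)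
        + (if k = i then (if c ≤ b i then 1 else 0) else 0) := by
    intro k
    by_cases hk : k = i
    · subst hk; simp only [if_pos rfl]; split_ifs <;> omega
    · have hk' : (k : ℕ) ≠ (i : ℕ) := fun h => hk (Fin.ext h)
      simp only [if_neg hk, add_zero]
      split_ifs <;> omega
  rw [Finset.sum_congr rfl (fun k _ => key k), Finset.sum_add_distrib,
    Finset.sum_ite_eq' Finset.univ i, if_pos (Finset.mem_univ i)]

def icnt (n : ℕ) (b : Fin n → ℕ) (c m₁ m₂ : ℕ) : ℕ :=
  ∑ k : Fin n, if m₁ ≤ (k : ℕ) ∧ (k : ℕ) < m₂ ∧ c ≤ b k then 1 else 0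

lemma cnt_split (b : Fin n → ℕ) (c : ℕ) {m₁ m₂ : ℕ} (h : m₁ ≤ m₂) :
    cnt n b c m₂ = cnt n b c m₁ + icnt n b c m₁ m₂ := by
  unfold cnt icnt
  rw [← Finset.sum_add_distrib]
  exact Finset.sum_congr rfl (fun k _ => by split_ifs <;> omega)

lemma cnt_prefix_eq {γ α : Fin n → ℕ} {p : ℕ}
    (hpre : ∀ k : Fin n, (k : ℕ) < p → γ k = α k) (c : ℕ) {m : ℕ} (hm : m ≤ p) :
    cnt n γ c m = cnt n α c m := by
  unfold cnt
  refine Finset.sum_congr rfl (fun k _ => ?_)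
  by_cases hk : (k : ℕ) < m
  · rw [hpre k (lt_of_lt_of_le hk hm)]
  · simp [hk]

lemma sum_split_pair (f : Fin n → ℕ) (i j : Fin n) (hne : i ≠ j) :
    ∑ k : Fin n, f k = f i + f j + ∑ k ∈ (Finset.univ.erase i).erase j, f k := by
  have hj : j ∈ Finset.univ.erase i := Finset.mem_erase.2 ⟨hne.symm, Finset.mem_univ _⟩
  rw [← Finset.add_sum_erase _ f (Finset.mem_univ i), ← Finset.add_sum_erase _ f hj, ← add_assoc]

/-- KEY: effect of a left swap on the counting statistics. -/
lemma cnt_swap (α : Fin n → ℕ) (i j : Fin n) (hij : i < j) (hα : α i < α j) (c m : ℕ) :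
    cnt n (fun k => α (Equiv.swap i j k)) c m
      = cnt n α c m + (if (i : ℕ) < m ∧ m ≤ (j : ℕ) ∧ α i < c ∧ c ≤ α j then 1 else 0) := by
  have hne : i ≠ j := ne_of_lt hij
  have hijn : (i : ℕ) < (j : ℕ) := hij
  unfold cnt
  have reindex : (∑ k : Fin n, if (k : ℕ) < m ∧ c ≤ α (Equiv.swap i j k) then 1 else 0)
      = ∑ k : Fin n, if ((Equiv.swap i j k : Fin n) : ℕ) < m ∧ c ≤ α k then 1 else 0 := by
    rw [← Equiv.sum_comp (Equiv.swap i j)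
      (fun k => if ((Equiv.swap i j k : Fin n) : ℕ) < m ∧ c ≤ α k then 1 else 0)]
    exact Finset.sum_congr rfl (fun k _ => by simp)
  rw [reindex,
    sum_split_pair (fun k => if ((Equiv.swap i j k : Fin n) : ℕ) < m ∧ c ≤ α k then 1 else 0) i j hne,
    sum_split_pair (fun k => if (k : ℕ) < m ∧ c ≤ α k then 1 else 0) i j hne]
  have hrest : ∑ k ∈ (Finset.univ.erase i).erase j,
        (if ((Equiv.swap i j k : Fin n) : ℕ) < m ∧ c ≤ α k then 1 else 0)
      = ∑ k ∈ (Finset.univ.erase i).erase j, (if (k : ℕ) < m ∧ c ≤ α k then 1 else 0) := by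
    refine Finset.sum_congr rfl (fun k hk => ?_)
    have h1 : k ≠ i := (Finset.mem_erase.1 (Finset.mem_erase.1 hk).2).1
    have h2 : k ≠ j := (Finset.mem_erase.1 hk).1
    rw [Equiv.swap_apply_of_ne_of_ne h1 h2]
  rw [hrest, Equiv.swap_apply_left, Equiv.swap_apply_right]
  split_ifs <;> omega

end S7

namespace S7
variable {n : ℕ}

/-- Lemma A: left-swap order implies the counting inequalities and equal totals. -/
lemma cnt_le_of_leftSwapLE {γ α : Fin n → ℕ} (h : leftSwapLE n γ α) :
    (∀ c m, cnt n α c m ≤ cnt n γ c m) ∧ (∀ c, cnt n α c n = cnt n γ c n) := by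
  induction h with
  | refl => exact ⟨fun _ _ => le_refl _, fun _ => rfl⟩
  | tail hab hbc ih =>
    obtain ⟨i, j, hij, hα, hb⟩ := hbc
    subst hb
    constructor
    · intro c m
      have := cnt_swap _ i j hij hα c m
      have := ih.1 c m
      split_ifs at * <;> omega
    · intro c
      have h1 := cnt_swap _ i j hij hα c n
      have h2 := ih.2 c
      have hjn : (j : ℕ) < n := j.isLt
      rw [if_neg (by omega)] at h1
      omega

/-- count of positions `k < m` with `b k = v` exactly. -/
def ecnt (n : ℕ) (b : Fin n → ℕ) (v m : ℕ) : ℕ :=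
  ∑ k : Fin n, if (k : ℕ) < m ∧ b k = v then 1 else 0

lemma cnt_ecnt (b : Fin n → ℕ) (v m : ℕ) :
    cnt n b v m = ecnt n b v m + cnt n b (v + 1) m := by
  unfold cnt ecnt
  rw [← Finset.sum_add_distrib]
  exact Finset.sum_congr rfl (fun k _ => by split_ifs <;> omega)

lemma ecnt_succ (b : Fin n → ℕ) (v : ℕ) (i : Fin n) :
    ecnt n b v ((i : ℕ) + 1) = ecnt n b v i + (if b i = v then 1 else 0) := by
  unfold ecnt
  have key : ∀ k : Fin n, (if (k : ℕ) < (i : ℕ) + 1 ∧ b k = v then 1 else 0)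
      = (if (k : ℕ) < (i : ℕ) ∧ b k = v then 1 else 0)
        + (if k = i then (if b i = v then 1 else 0) else 0) := by
    intro k
    by_cases hk : k = i
    · subst hk; simp only [if_pos rfl]; split_ifs <;> omega
    · have hk' : (k : ℕ) ≠ (i : ℕ) := fun h => hk (Fin.ext h)
      simp only [if_neg hk, add_zero]
      split_ifs <;> omega
  rw [Finset.sum_congr rfl (fun k _ => key k), Finset.sum_add_distrib,
    Finset.sum_ite_eq' Finset.univ i, if_pos (Finset.mem_univ i)]

lemma ecnt_prefix_eq {γ α : Fin n → ℕ} {p : ℕ}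
    (hpre : ∀ k : Fin n, (k : ℕ) < p → γ k = α k) (v : ℕ) {m : ℕ} (hm : m ≤ p) :
    ecnt n γ v m = ecnt n α v m := by
  unfold ecnt
  refine Finset.sum_congr rfl (fun k _ => ?_)
  by_cases hk : (k : ℕ) < m
  · rw [hpre k (lt_of_lt_of_le hk hm)]
  · simp [hk]

lemma ecnt_mono (b : Fin n → ℕ) (v : ℕ) {m₁ m₂ : ℕ} (h : m₁ ≤ m₂) :
    ecnt n b v m₁ ≤ ecnt n b v m₂ := by
  unfold ecnt
  exact Finset.sum_le_sum (fun k _ => by split_ifs <;> omega)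

end S7

namespace S7
variable {n : ℕ}

/-- Lemma B: the counting conditions imply left-swap order. -/
lemma leftSwapLE_of_cnt (γ : Fin n → ℕ) :
    ∀ N (α : Fin n → ℕ), (∑ k : Fin n, (k : ℕ) * α k) = N →
      (∀ c m, cnt n α c m ≤ cnt n γ c m) → (∀ c, cnt n α c n = cnt n γ c n) →
      leftSwapLE n γ α := by
  intro N
  induction N using Nat.strong_induction_on with
  | _ N ih =>
    intro α hM h1 h2
    by_cases hEq : ∀ k, γ k = α k
    · exact funext hEq ▸ Relation.ReflTransGen.refl
    · push_neg at hEq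
      -- minimal index where they differ
      have hIne : (Finset.univ.filter (fun k : Fin n => γ k ≠ α k)).Nonempty := by
        obtain ⟨k, hk⟩ := hEq
        exact ⟨k, Finset.mem_filter.2 ⟨Finset.mem_univ _, hk⟩⟩
      set i : Fin n := (Finset.univ.filter (fun k : Fin n => γ k ≠ α k)).min' hIne with hi
      have hi_ne : γ i ≠ α i :=
        (Finset.mem_filter.1 ((Finset.univ.filter _).min'_mem hIne)).2
      have hpre : ∀ k : Fin n, (k : ℕ) < (i : ℕ) → γ k = α k := by
        intro k hk
        by_contra hne
        have hmem : k ∈ Finset.univ.filter (fun k : Fin n => γ k ≠ α k) :=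
          Finset.mem_filter.2 ⟨Finset.mem_univ _, hne⟩
        have : i ≤ k := by rw [hi]; exact Finset.min'_le _ _ hmem
        exact absurd (lt_of_le_of_lt this hk) (lt_irrefl _)
      -- γ i > α i
      have hγα : α i < γ i := by
        rcases Nat.lt_trichotomy (γ i) (α i) with hlt | heq | hgt
        · exfalso
          have e1 := cnt_succ α (α i) i
          have e2 := cnt_succ γ (α i) i
          have e3 := cnt_prefix_eq hpre (α i) (le_refl (i : ℕ))
          have e4 := h1 (α i) ((i : ℕ) + 1)
          rw [if_pos (le_refl _)] at e1
          rw [if_neg (by omega)] at e2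
          omega
        · exact absurd heq hi_ne
        · exact hgt
      -- existence of j > i with α j = γ i
      have hex : ∃ j : Fin n, (i : ℕ) < (j : ℕ) ∧ α j = γ i := by
        by_contra hno
        push_neg at hno
        have t1 : ecnt n α (γ i) n = ecnt n γ (γ i) n := by
          have a1 := cnt_ecnt α (γ i) n
          have a2 := cnt_ecnt γ (γ i) n
          have b1 := h2 (γ i)
          have b2 := h2 (γ i + 1)
          omega
        have s1 := ecnt_succ α (γ i) i
        have s2 := ecnt_succ γ (γ i) i
        rw [if_neg (by omega)] at s1
        rw [if_pos rfl] at s2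
        have p1 := ecnt_prefix_eq hpre (γ i) (le_refl (i : ℕ))
        have mono := ecnt_mono γ (γ i) (show (i : ℕ) + 1 ≤ n by have := i.isLt; omega)
        have cap : ecnt n α (γ i) n ≤ ecnt n α (γ i) ((i : ℕ) + 1) := by
          unfold ecnt
          refine Finset.sum_le_sum (fun k _ => ?_)
          have hk := hno k
          split_ifs <;> omega
        omega
      -- the chosen j : minimal with i < j and α i < α j ≤ γ i
      have hTne : (Finset.univ.filter
          (fun k : Fin n => (i : ℕ) < (k : ℕ) ∧ α i < α k ∧ α k ≤ γ i)).Nonempty := by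
        obtain ⟨j, hj1, hj2⟩ := hex
        exact ⟨j, Finset.mem_filter.2 ⟨Finset.mem_univ _, hj1, by omega, by omega⟩⟩
      set j : Fin n := (Finset.univ.filter
          (fun k : Fin n => (i : ℕ) < (k : ℕ) ∧ α i < α k ∧ α k ≤ γ i)).min' hTne with hj
      obtain ⟨hij', hαij, hαj_le⟩ :
          (i : ℕ) < (j : ℕ) ∧ α i < α j ∧ α j ≤ γ i :=
        (Finset.mem_filter.1 ((Finset.univ.filter _).min'_mem hTne)).2
      have hmin : ∀ k : Fin n, (i : ℕ) < (k : ℕ) → (k : ℕ) < (j : ℕ) →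
          ¬(α i < α k ∧ α k ≤ γ i) := by
        intro k hk1 hk2 hbad
        have hmem : k ∈ Finset.univ.filter
            (fun k : Fin n => (i : ℕ) < (k : ℕ) ∧ α i < α k ∧ α k ≤ γ i) :=
          Finset.mem_filter.2 ⟨Finset.mem_univ _, hk1, hbad.1, hbad.2⟩
        have : j ≤ k := by rw [hj]; exact Finset.min'_le _ _ hmem
        exact absurd (lt_of_le_of_lt this hk2) (lt_irrefl _)
      have hij : i < j := hij'
      -- the new composition β
      set β : Fin n → ℕ := fun k => α (Equiv.swap i j k) with hβ
      -- counting inequalities for β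
      have h1' : ∀ c m, cnt n β c m ≤ cnt n γ c m := by
        intro c m
        rw [hβ, cnt_swap α i j hij hαij c m]
        by_cases hreg : (i : ℕ) < m ∧ m ≤ (j : ℕ) ∧ α i < c ∧ c ≤ α j
        · rw [if_pos hreg]
          obtain ⟨hm1, hm2, hc1, hc2⟩ := hreg
          have hcv : c ≤ γ i := le_trans hc2 hαj_le
          have d1 := cnt_split γ c (show (i : ℕ) + 1 ≤ m by omega)
          have d2 := cnt_split α c (show (i : ℕ) + 1 ≤ m by omega)
          have s1 := cnt_succ γ c i
          rw [if_pos hcv] at s1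
          have s2 := cnt_succ α c i
          rw [if_neg (by omega)] at s2
          have p1 := cnt_prefix_eq hpre c (le_refl (i : ℕ))
          have x1 : icnt n γ (γ i + 1) ((i : ℕ) + 1) m ≤ icnt n γ c ((i : ℕ) + 1) m := by
            unfold icnt
            exact Finset.sum_le_sum (fun k _ => by split_ifs <;> omega)
          have y1 : icnt n α c ((i : ℕ) + 1) m = icnt n α (γ i + 1) ((i : ℕ) + 1) m := by
            unfold icnt
            refine Finset.sum_congr rfl (fun k _ => ?_)
            by_cases hk : (i : ℕ) + 1 ≤ (k : ℕ) ∧ (k : ℕ) < m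
            · have hmk := hmin k (by omega) (by omega)
              split_ifs <;> omega
            · split_ifs <;> omega
          have v1 := h1 (γ i + 1) m
          have dv1 := cnt_split γ (γ i + 1) (show (i : ℕ) + 1 ≤ m by omega)
          have dv2 := cnt_split α (γ i + 1) (show (i : ℕ) + 1 ≤ m by omega)
          have sv1 := cnt_succ γ (γ i + 1) i
          rw [if_neg (by omega)] at sv1
          have sv2 := cnt_succ α (γ i + 1) i
          rw [if_neg (by omega)] at sv2
          have pv1 := cnt_prefix_eq hpre (γ i + 1) (le_refl (i : ℕ))
          omega
        · rw [if_neg hreg]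
          have := h1 c m
          omega
      have h2' : ∀ c, cnt n β c n = cnt n γ c n := by
        intro c
        rw [hβ, cnt_swap α i j hij hαij c n]
        have hjn : (j : ℕ) < n := j.isLt
        rw [if_neg (by omega)]
        exact h2 c
      -- the measure decreases
      have hMβ : (∑ k : Fin n, (k : ℕ) * β k) < N := by
        rw [← hM]
        have reidx : (∑ k : Fin n, (k : ℕ) * α (Equiv.swap i j k))
            = ∑ k : Fin n, ((Equiv.swap i j k : Fin n) : ℕ) * α k := by
          rw [← Equiv.sum_comp (Equiv.swap i j)
            (fun k => ((Equiv.swap i j k : Fin n) : ℕ) * α k)]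
          exact Finset.sum_congr rfl (fun k _ => by simp)
        rw [hβ, reidx,
          sum_split_pair (fun k => ((Equiv.swap i j k : Fin n) : ℕ) * α k) i j (ne_of_lt hij),
          sum_split_pair (fun k => (k : ℕ) * α k) i j (ne_of_lt hij)]
        have hrest : ∑ k ∈ (Finset.univ.erase i).erase j,
              ((Equiv.swap i j k : Fin n) : ℕ) * α k
            = ∑ k ∈ (Finset.univ.erase i).erase j, (k : ℕ) * α k := by
          refine Finset.sum_congr rfl (fun k hk => ?_)
          have e1 : k ≠ i := (Finset.mem_erase.1 (Finset.mem_erase.1 hk).2).1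
          have e2 : k ≠ j := (Finset.mem_erase.1 hk).1
          rw [Equiv.swap_apply_of_ne_of_ne e1 e2]
        rw [hrest, Equiv.swap_apply_left, Equiv.swap_apply_right]
        have hd : ∃ d, (j : ℕ) = (i : ℕ) + d + 1 := ⟨(j : ℕ) - (i : ℕ) - 1, by omega⟩
        have he : ∃ e, α j = α i + e + 1 := ⟨α j - α i - 1, by omega⟩
        obtain ⟨d, hd⟩ := hd
        obtain ⟨e, he⟩ := he
        rw [hd, he]
        ring_nf
        nlinarith []
      exact Relation.ReflTransGen.tail (ih _ hMβ β rfl h1' h2')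
        ⟨i, j, hij, hαij, hβ⟩

end S7

namespace S7
variable {n : ℕ}

/-- Forward: barring is monotone for the left swap order. -/
lemma leftSwapLE_bar {γ α : Fin n → ℕ} (h : leftSwapLE n γ α) :
    leftSwapLE n (fun i => γ i - 1) (fun i => α i - 1) := by
  induction h with
  | refl => exact Relation.ReflTransGen.refl
  | tail hab hbc ih =>
    rename_i b' α'
    obtain ⟨i, j, hij, hα, hb⟩ := hbc
    subst hb
    by_cases hbar : α' i - 1 < α' j - 1
    · exact Relation.ReflTransGen.tail ih ⟨i, j, hij, hbar, rfl⟩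
    · have heq : (fun k : Fin n => α' (Equiv.swap i j k) - 1)
          = (fun k : Fin n => α' k - 1) := by
        funext k
        rcases eq_or_ne k i with rfl | hki
        · rw [Equiv.swap_apply_left]; omega
        · rcases eq_or_ne k j with rfl | hkj
          · rw [Equiv.swap_apply_right]; omega
          · rw [Equiv.swap_apply_of_ne_of_ne hki hkj]
      exact heq ▸ ih

lemma cnt_zero_eq (γ α : Fin n → ℕ) (m : ℕ) : cnt n γ 0 m = cnt n α 0 m := by
  unfold cnt
  exact Finset.sum_congr rfl (fun k _ => by simp)

lemma cnt_bar (b : Fin n → ℕ) (c m : ℕ) :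
    cnt n b (c + 2) m = cnt n (fun k => b k - 1) (c + 1) m := by
  unfold cnt
  refine Finset.sum_congr rfl (fun k _ => ?_)
  have hb : ((fun k : Fin n => b k - 1) k) = b k - 1 := rfl
  rw [hb]
  split_ifs <;> omega

end S7

namespace S7
variable {n : ℕ}

lemma cnt_one_eq {γ α : Fin n → ℕ} (hs : suppC n γ = suppC n α) (m : ℕ) :
    cnt n α 1 m = cnt n γ 1 m := by
  unfold cnt
  refine Finset.sum_congr rfl (fun k _ => ?_)
  have hk := Finset.ext_iff.1 hs k
  simp only [suppC, Finset.mem_filter, Finset.mem_univ, true_and] at hk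
  split_ifs <;> omega

end S7


/-- for `supp α = supp γ`, `γ ⪯ α` in left swap order iff `γ̄ ⪯ ᾱ`. -/
theorem stmt7 (n : ℕ) (α γ : Fin n → ℕ) (h : suppC n γ = suppC n α) :
    leftSwapLE n γ α ↔ leftSwapLE n (fun i => γ i - 1) (fun i => α i - 1) := by
  constructor
  · exact S7.leftSwapLE_bar
  · intro hbar
    have A := S7.cnt_le_of_leftSwapLE hbar
    have h1 : ∀ c m, S7.cnt n α c m ≤ S7.cnt n γ c m := by
      intro c m
      match c with
      | 0 => exact le_of_eq (S7.cnt_zero_eq α γ m)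
      | 1 => exact le_of_eq (S7.cnt_one_eq h m)
      | (c + 2) =>
        rw [S7.cnt_bar α c m, S7.cnt_bar γ c m]
        exact A.1 (c + 1) m
    have h2 : ∀ c, S7.cnt n α c n = S7.cnt n γ c n := by
      intro c
      match c with
      | 0 => exact S7.cnt_zero_eq α γ n
      | 1 => exact S7.cnt_one_eq h n
      | (c + 2) =>
        rw [S7.cnt_bar α c n, S7.cnt_bar γ c n]
        exact A.2 (c + 1)
    exact S7.leftSwapLE_of_cnt γ _ α rfl h1 h2
end
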